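/- arXiv:1301.4639 — 4 statements merged into one kernel-verified Lean document; each statement's English description precedes it below -/
import Mathlib

section
/- For any finite simple connected super-λ^(h) graph G (h ≥ 0 an integer), the persistence satisfies ρ^(h)(G) ≤ δ(G) − 1, where δ(G) is the minimum degree of G. -/
open SimpleGraph

variable {V : Type*}

/-- The degree of a vertex, as the cardinality of its neighbor set. -/
noncomputable def degN (G : SimpleGraph V) (v : V) : ℕ := (G.neighborSet v).ncard

/-- The minimum degree `δ(G)`. -/
noncomputable def minDeg (G : SimpleGraph V) : ℕ := sInf {k | ∃ v, degN G v = k}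

/-- `d_G(X)`: the number of edges of `G` with exactly one endpoint in `X`. -/
noncomputable def dOut (G : SimpleGraph V) (X : Set V) : ℕ :=
  {e ∈ G.edgeSet | ∃ x ∈ X, ∃ y ∈ Xᶜ, e = s(x, y)}.ncard

/-- `F` is an `h`-extra edge-cut of `G`: a set of edges of `G` whose removal disconnects `G`
and such that every connected component of `G - F` has more than `h` vertices. -/
def IsExtraEdgeCut (G : SimpleGraph V) (h : ℕ) (F : Set (Sym2 V)) : Prop :=
  F ⊆ G.edgeSet ∧ ¬(G.deleteEdges F).Connected ∧
    ∀ c : (G.deleteEdges F).ConnectedComponent, h < c.supp.ncard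

/-- `G` is `λ^(h)`-connected: an `h`-extra edge-cut exists. -/
def LambdaConn (G : SimpleGraph V) (h : ℕ) : Prop := ∃ F, IsExtraEdgeCut G h F

/-- The `h`-extra edge-connectivity `λ^(h)(G)`: the minimum cardinality of an
`h`-extra edge-cut. -/
noncomputable def lambdaH (G : SimpleGraph V) (h : ℕ) : ℕ :=
  sInf {k | ∃ F, IsExtraEdgeCut G h F ∧ F.ncard = k}

/-- `ξ_h(G)`: the minimum of `d_G(X)` over vertex sets `X` of size `h + 1` inducing a
connected subgraph. -/
noncomputable def xiH (G : SimpleGraph V) (h : ℕ) : ℕ :=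
  sInf {k | ∃ X : Set V, X.ncard = h + 1 ∧ (G.induce X).Connected ∧ dOut G X = k}

/-- `G` is super-`λ^(h)`: it is connected, `λ^(h)`-connected, `λ^(h)`-optimal
(`λ^(h)(G) = ξ_h(G)`), and every minimum `h`-extra edge-cut leaves a component with
exactly `h + 1` vertices. -/
def SuperLambda (G : SimpleGraph V) (h : ℕ) : Prop :=
  G.Connected ∧ LambdaConn G h ∧ lambdaH G h = xiH G h ∧
    ∀ F : Set (Sym2 V), IsExtraEdgeCut G h F → F.ncard = lambdaH G h →
      ∃ c : (G.deleteEdges F).ConnectedComponent, c.supp.ncard = h + 1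

/-- The persistence `ρ^(h)(G)`: the largest `m` such that `G - F` is super-`λ^(h)` for
every set `F` of at most `m` edges of `G`. -/
noncomputable def rhoH (G : SimpleGraph V) (h : ℕ) : ℕ :=
  sSup {m : ℕ | ∀ F : Set (Sym2 V), F ⊆ G.edgeSet → F.ncard ≤ m →
    SuperLambda (G.deleteEdges F) h}

/-- `ξ(G)`: the minimum edge-degree `deg x + deg y - 2` over the edges `xy` of `G`. -/
noncomputable def xiEdge (G : SimpleGraph V) : ℕ :=
  sInf {k | ∃ x y, G.Adj x y ∧ degN G x + degN G y - 2 = k}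

/-- `η(G)`: the number of edges of `G` whose edge-degree equals `ξ(G)`. -/
noncomputable def eta (G : SimpleGraph V) : ℕ :=
  {e ∈ G.edgeSet | ∃ x y, e = s(x, y) ∧ degN G x + degN G y - 2 = xiEdge G}.ncard

/-- For a super-`λ^(h)` graph, `ρ^(h)(G) ≤ δ(G) - 1`. -/
theorem stmt1 {V : Type*} [Fintype V] (G : SimpleGraph V) (h : ℕ)
    (hs : SuperLambda G h) :
    rhoH G h ≤ minDeg G - 1 := by
  classical
  obtain ⟨hconn, ⟨F0, _, hF0, _⟩, _, _⟩ := hs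
  have hnontriv : Nontrivial V := by
    by_contra hnt
    rw [not_nontrivial_iff_subsingleton] at hnt
    haveI : Nonempty V := hconn.nonempty
    exact hF0 ((connected_iff _).2 ⟨fun a b => by rw [Subsingleton.elim a b], this⟩)
  apply csSup_le'
  intro m hm
  by_contra hlt
  push_neg at hlt
  -- pick a vertex of minimum degree
  have hne : {k | ∃ v, degN G v = k}.Nonempty := by
    obtain ⟨v⟩ := hconn.nonempty
    exact ⟨degN G v, v, rfl⟩
  obtain ⟨v, hv⟩ := Nat.sInf_mem hne
  obtain ⟨u, hu⟩ := exists_ne v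
  obtain ⟨w⟩ := hconn.preconnected v u
  have hadj : ∃ x, G.Adj v x := by
    cases w with
    | nil => exact absurd rfl hu.symm
    | cons h p => exact ⟨_, h⟩
  obtain ⟨x, hx⟩ := hadj
  have hfin : (G.neighborSet v).Finite := Set.toFinite _
  have hdeg1 : 1 ≤ degN G v := by
    rw [degN]
    rw [Nat.one_le_iff_ne_zero, Ne, Set.ncard_eq_zero hfin, ← Ne,
      ← Set.nonempty_iff_ne_empty]
    exact ⟨x, hx⟩
  have hdm : degN G v ≤ m := by
    have : minDeg G = degN G v := hv.symm ▸ rfl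
    omega
  -- delete all edges incident to v
  set F := G.incidenceSet v with hF
  have hFcard : F.ncard = degN G v := by
    rw [degN, ← Nat.card_coe_set_eq, ← Nat.card_coe_set_eq,
      Nat.card_congr (G.incidenceSetEquivNeighborSet v)]
  have hconn' := (hm F (G.incidenceSet_subset v) (hFcard ▸ hdm)).1
  -- v is isolated in `G.deleteEdges F`, contradicting connectedness
  obtain ⟨w'⟩ := hconn'.preconnected v u
  cases w' with
  | nil => exact hu.symm rfl
  | cons hadj p =>
    rw [deleteEdges_adj] at hadj
    exact hadj.2 ⟨(G.mem_edgeSet.2 hadj.1), Sym2.mem_mk_left v _⟩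
end

section
/- Let G be a finite simple connected graph that is λ'-connected and λ'-optimal, and let F ⊆ E(G) with |F| ≤ δ(G) − 1, where δ(G) is the minimum degree of G. Then G − F is λ'-connected. -/
open SimpleGraph

variable {V : Type*}

private lemma exists_adj_of_reachable_ne {H : SimpleGraph V} {v u : V}
    (h : H.Reachable v u) (hne : v ≠ u) : ∃ w, H.Adj v w := by
  obtain ⟨p⟩ := h
  cases p with
  | nil => exact absurd rfl hne
  | cons h _ => exact ⟨_, h⟩

private lemma comp_ge2 [Fintype V] (K : SimpleGraph V) (h : ∀ v, ∃ u, K.Adj v u) :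
    ∀ c : K.ConnectedComponent, 1 < c.supp.ncard := by
  intro c
  induction c using SimpleGraph.ConnectedComponent.ind with
  | _ v =>
    obtain ⟨u, hu⟩ := h v
    rw [Set.one_lt_ncard_iff (Set.toFinite _)]
    exact ⟨v, u, (ConnectedComponent.mem_supp_iff _ _).mpr rfl,
      (ConnectedComponent.mem_supp_iff _ _).mpr
        (ConnectedComponent.connectedComponentMk_eq_of_adj hu).symm, hu.ne⟩

private lemma buildPartition [Fintype V] (H : SimpleGraph V) (hH : H.Connected) :
    ∀ (n : ℕ) (X Y : Set V), Disjoint X Y → X.Nonempty → Y.Nonempty →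
    (∀ v ∈ X, ∃ u ∈ X, H.Adj v u) → (∀ v ∈ Y, ∃ u ∈ Y, H.Adj v u) →
    (X ∪ Y)ᶜ.ncard ≤ n →
    ∃ Z : Set V, Z.Nonempty ∧ Zᶜ.Nonempty ∧ (∀ v ∈ Z, ∃ u ∈ Z, H.Adj v u) ∧
      (∀ v ∈ Zᶜ, ∃ u ∈ Zᶜ, H.Adj v u) := by
  intro n
  induction n with
  | zero =>
    intro X Y hdisj hX hY hXadj hYadj hcard
    have hempty : (X ∪ Y)ᶜ = ∅ :=
      (Set.ncard_eq_zero (Set.toFinite _)).mp (Nat.le_zero.mp hcard)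
    have huniv : X ∪ Y = Set.univ := Set.compl_empty_iff.mp hempty
    have hYc : Y = Xᶜ := by
      ext v
      constructor
      · intro hv hvX
        exact Set.disjoint_left.mp hdisj hvX hv
      · intro hv
        have : v ∈ X ∪ Y := huniv ▸ Set.mem_univ v
        rcases this with h | h
        · exact absurd h hv
        · exact h
    refine ⟨X, hX, ?_, hXadj, ?_⟩
    · rw [← hYc]; exact hY
    · rw [← hYc]; exact hYadj
  | succ n ih =>
    intro X Y hdisj hX hY hXadj hYadj hcard
    by_cases hempty : (X ∪ Y)ᶜ = ∅
    · exact ih X Y hdisj hX hY hXadj hYadj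
        (by rw [hempty, Set.ncard_empty]; exact Nat.zero_le n)
    · obtain ⟨w, hw⟩ := Set.nonempty_iff_ne_empty.mpr hempty
      obtain ⟨a, ha⟩ := hX
      obtain ⟨p⟩ := hH.preconnected a w
      obtain ⟨d, _, hdf, hds⟩ := p.exists_boundary_dart (X ∪ Y) (Or.inl ha) hw
      have hadj : H.Adj d.fst d.snd := d.adj
      have hsX : d.snd ∉ X := fun h => hds (Or.inl h)
      have hsY : d.snd ∉ Y := fun h => hds (Or.inr h)
      rcases hdf with hfX | hfY
      · have hcompl : (insert d.snd X ∪ Y)ᶜ = (X ∪ Y)ᶜ \ {d.snd} := by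
          ext v
          simp only [Set.mem_compl_iff, Set.mem_union, Set.mem_insert_iff, Set.mem_diff,
            Set.mem_singleton_iff]
          tauto
        refine ih (insert d.snd X) Y ?_ ⟨a, Set.mem_insert_of_mem _ ha⟩ hY ?_ hYadj ?_
        · rw [Set.disjoint_left]
          intro x hx hxY
          rcases Set.mem_insert_iff.mp hx with rfl | hxX
          · exact hsY hxY
          · exact Set.disjoint_left.mp hdisj hxX hxY
        · intro v hv
          rcases Set.mem_insert_iff.mp hv with rfl | hv'
          · exact ⟨d.fst, Set.mem_insert_of_mem _ hfX, hadj.symm⟩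
          · obtain ⟨u, hu, hu'⟩ := hXadj v hv'
            exact ⟨u, Set.mem_insert_of_mem _ hu, hu'⟩
        · rw [hcompl]
          have := Set.ncard_diff_singleton_lt_of_mem (show d.snd ∈ (X ∪ Y)ᶜ from hds) (Set.toFinite ((X ∪ Y)ᶜ))
          omega
      · have hcompl : (X ∪ insert d.snd Y)ᶜ = (X ∪ Y)ᶜ \ {d.snd} := by
          ext v
          simp only [Set.mem_compl_iff, Set.mem_union, Set.mem_insert_iff, Set.mem_diff,
            Set.mem_singleton_iff]
          tauto
        refine ih X (insert d.snd Y) ?_ ⟨a, ha⟩ ⟨d.snd, Set.mem_insert _ _⟩ hXadj ?_ ?_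
        · rw [Set.disjoint_left]
          intro x hxX hy
          rcases Set.mem_insert_iff.mp hy with rfl | hyY
          · exact hsX hxX
          · exact Set.disjoint_left.mp hdisj hxX hyY
        · intro v hv
          rcases Set.mem_insert_iff.mp hv with rfl | hv'
          · exact ⟨d.fst, Set.mem_insert_of_mem _ hfY, hadj.symm⟩
          · obtain ⟨u, hu, hu'⟩ := hYadj v hv'
            exact ⟨u, Set.mem_insert_of_mem _ hu, hu'⟩
        · rw [hcompl]
          have := Set.ncard_diff_singleton_lt_of_mem (show d.snd ∈ (X ∪ Y)ᶜ from hds) (Set.toFinite ((X ∪ Y)ᶜ))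
          omega

private lemma lambdaConn_of_partition [Fintype V] (H : SimpleGraph V) (Z : Set V)
    (hZ : Z.Nonempty) (hZc : Zᶜ.Nonempty)
    (h1 : ∀ v ∈ Z, ∃ u ∈ Z, H.Adj v u) (h2 : ∀ v ∈ Zᶜ, ∃ u ∈ Zᶜ, H.Adj v u) :
    LambdaConn H 1 := by
  classical
  set F' : Set (Sym2 V) := {e | e ∈ H.edgeSet ∧ ∃ x ∈ Z, ∃ y ∈ Zᶜ, e = s(x, y)} with hF'
  have hkeep : ∀ {v u : V}, H.Adj v u → (v ∈ Z ↔ u ∈ Z) → (H.deleteEdges F').Adj v u := by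
    intro v u hadj hiff
    rw [deleteEdges_adj]
    refine ⟨hadj, ?_⟩
    rintro ⟨-, x, hx, y, hy, he⟩
    rw [Sym2.eq_iff] at he
    rcases he with ⟨hvx, huy⟩ | ⟨hvy, hux⟩
    · exact hy (huy ▸ hiff.mp (hvx ▸ hx))
    · exact hy (hvy ▸ hiff.mpr (hux ▸ hx))
  have hstay : ∀ {x y : V} (_ : (H.deleteEdges F').Walk x y), x ∈ Z → y ∈ Z := by
    intro x y p
    induction p with
    | nil => exact id
    | @cons x b y hadj p ih =>
      intro hx
      apply ih
      by_contra hb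
      have hmem : s(x, b) ∈ F' := ⟨(H.mem_edgeSet).mpr (deleteEdges_adj.mp hadj).1, x, hx, b, hb, rfl⟩
      exact (deleteEdges_adj.mp hadj).2 hmem
  obtain ⟨a, ha⟩ := hZ
  obtain ⟨c, hc⟩ := hZc
  refine ⟨F', fun e he => he.1, ?_, ?_⟩
  · intro hcon
    obtain ⟨p⟩ := hcon.preconnected a c
    exact hc (hstay p ha)
  · apply comp_ge2
    intro v
    by_cases hv : v ∈ Z
    · obtain ⟨u, hu, hadj⟩ := h1 v hv
      exact ⟨u, hkeep hadj (iff_of_true hv hu)⟩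
    · obtain ⟨u, hu, hadj⟩ := h2 v hv
      exact ⟨u, hkeep hadj (iff_of_false hv hu)⟩

/-- If `G` is `λ'`-connected and `λ'`-optimal and `|F| ≤ δ(G) - 1`, then `G - F` is
`λ'`-connected. -/
theorem stmt2 {V : Type*} [Fintype V] (G : SimpleGraph V)
    (hconn : G.Connected) (hl : LambdaConn G 1) (hopt : lambdaH G 1 = xiEdge G)
    (F : Set (Sym2 V)) (hF : F ⊆ G.edgeSet) (hFcard : F.ncard ≤ minDeg G - 1) :
    LambdaConn (G.deleteEdges F) 1 := by
  classical
  obtain ⟨S, hSsub, hSdisc, hScomp⟩ := hl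
  have hVne : Nonempty V := hconn.nonempty
  obtain ⟨v0, w0, hvw⟩ : ∃ v0 w0, ¬ (G.deleteEdges S).Reachable v0 w0 := by
    by_contra h
    push_neg at h
    exact hSdisc ⟨h⟩
  have hv0w0 : v0 ≠ w0 := fun h => hvw (h ▸ Reachable.refl v0)
  set GS := G.deleteEdges S with hGSdef
  have hc1c2 : GS.connectedComponentMk v0 ≠ GS.connectedComponentMk w0 :=
    fun h => hvw (ConnectedComponent.eq.mp h)
  have hsuppdisj : Disjoint (GS.connectedComponentMk v0).supp (GS.connectedComponentMk w0).supp := by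
    rw [Set.disjoint_left]
    intro x hx1 hx2
    rw [ConnectedComponent.mem_supp_iff] at hx1 hx2
    exact hc1c2 (hx1.symm.trans hx2)
  have hcard4 : 4 ≤ (Set.univ : Set V).ncard := by
    have h1 := hScomp (GS.connectedComponentMk v0)
    have h2 := hScomp (GS.connectedComponentMk w0)
    have hle := Set.ncard_le_ncard
      (Set.subset_univ ((GS.connectedComponentMk v0).supp ∪ (GS.connectedComponentMk w0).supp))
      (Set.toFinite _)
    rw [Set.ncard_union_eq hsuppdisj (Set.toFinite _) (Set.toFinite _)] at hle
    omega
  have hedge_in_comp : ∀ z0 : V, ∃ p q : V, G.Adj p q ∧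
      p ∈ (GS.connectedComponentMk z0).supp ∧ q ∈ (GS.connectedComponentMk z0).supp := by
    intro z0
    obtain ⟨q, hq, hqne⟩ := Set.exists_ne_of_one_lt_ncard (hScomp (GS.connectedComponentMk z0)) z0
    rw [ConnectedComponent.mem_supp_iff] at hq
    have hreach : GS.Reachable z0 q := (ConnectedComponent.eq.mp hq).symm
    obtain ⟨w, hw⟩ := exists_adj_of_reachable_ne hreach (fun h => hqne h.symm)
    refine ⟨z0, w, (deleteEdges_adj.mp hw).1, (ConnectedComponent.mem_supp_iff _ _).mpr rfl, ?_⟩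
    exact (ConnectedComponent.mem_supp_iff _ _).mpr
      (ConnectedComponent.connectedComponentMk_eq_of_adj hw).symm
  have hGadj : ∀ v : V, ∃ u, G.Adj v u := by
    intro v
    by_cases h : v = w0
    · have hne : v ≠ v0 := by rw [h]; exact hv0w0.symm
      exact exists_adj_of_reachable_ne (hconn.preconnected v v0) hne
    · exact exists_adj_of_reachable_ne (hconn.preconnected v w0) h
  have hdegpos : ∀ v : V, 1 ≤ degN G v := by
    intro v
    obtain ⟨u, hu⟩ := hGadj v
    exact (Set.ncard_pos (Set.toFinite _)).mpr ⟨u, hu⟩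
  have hminle : ∀ v : V, minDeg G ≤ degN G v := fun v => Nat.sInf_le ⟨v, rfl⟩
  have hminpos : 1 ≤ minDeg G := by
    obtain ⟨v, hv⟩ := Nat.sInf_mem (⟨degN G v0, v0, rfl⟩ : {k | ∃ v, degN G v = k}.Nonempty)
    rw [minDeg, ← hv]
    exact hdegpos v
  have hFlt : ∀ v : V, F.ncard < degN G v := by
    intro v
    have := hminle v
    omega
  set H := G.deleteEdges F with hHdef
  have factN : ∀ v : V, ∃ u, H.Adj v u := by
    intro v
    by_contra hno
    push_neg at hno
    have hsub : ∀ u ∈ G.neighborSet v, (fun u => s(v, u)) u ∈ F := by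
      intro u hu
      by_contra hmem
      exact hno u (deleteEdges_adj.mpr ⟨hu, hmem⟩)
    have hinj : Set.InjOn (fun u => s(v, u)) (G.neighborSet v) :=
      fun u _ u' _ h => Sym2.congr_right.mp h
    have hle := Set.ncard_le_ncard_of_injOn _ hsub hinj (Set.toFinite F)
    have := hFlt v
    rw [degN] at this
    omega
  by_cases hHconn : H.Connected
  · by_cases hdisj : ∃ a b c d : V, H.Adj a b ∧ H.Adj c d ∧ a ≠ c ∧ a ≠ d ∧ b ≠ c ∧ b ≠ d
    · obtain ⟨a, b, c, d, hab, hcd, hac, had, hbc, hbd⟩ := hdisj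
      have hdis : Disjoint ({a, b} : Set V) ({c, d} : Set V) := by
        rw [Set.disjoint_left]
        intro x hx hx'
        simp only [Set.mem_insert_iff, Set.mem_singleton_iff] at hx hx'
        rcases hx with rfl | rfl <;> rcases hx' with rfl | rfl <;> tauto
      obtain ⟨Z, hZ, hZc, hz1, hz2⟩ := buildPartition H hHconn
        ((({a, b} : Set V) ∪ {c, d})ᶜ.ncard) {a, b} {c, d} hdis
        ⟨a, Set.mem_insert _ _⟩ ⟨c, Set.mem_insert _ _⟩
        (by
          intro v hv
          rcases Set.mem_insert_iff.mp hv with rfl | hv'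
          · exact ⟨b, Set.mem_insert_of_mem _ rfl, hab⟩
          · rw [Set.mem_singleton_iff] at hv'
            subst hv'
            exact ⟨a, Set.mem_insert _ _, hab.symm⟩)
        (by
          intro v hv
          rcases Set.mem_insert_iff.mp hv with rfl | hv'
          · exact ⟨d, Set.mem_insert_of_mem _ rfl, hcd⟩
          · rw [Set.mem_singleton_iff] at hv'
            subst hv'
            exact ⟨c, Set.mem_insert _ _, hcd.symm⟩)
        le_rfl
      exact lambdaConn_of_partition H Z hZ hZc hz1 hz2
    · exfalso
      push_neg at hdisj
      obtain ⟨b, hab⟩ := factN v0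
      set a := v0 with hadef
      have hout : ∀ x u : V, x ≠ a → x ≠ b → H.Adj x u → u = a ∨ u = b := by
        intro x u hxa hxb hxu
        by_cases hua : u = a
        · exact Or.inl hua
        by_cases hub : u = b
        · exact Or.inr hub
        exact absurd (hdisj a b x u hab hxu hxa.symm (Ne.symm hua) hxb.symm).symm hub
      have hstar : ∃ z : V, ∀ x u : V, x ≠ z → H.Adj x u → u = z := by
        by_cases hQ : ∃ x, x ≠ a ∧ x ≠ b ∧ H.Adj x b
        · by_cases hP : ∃ y, y ≠ a ∧ y ≠ b ∧ H.Adj y a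
          · exfalso
            obtain ⟨x, hxa, hxb, hxadj⟩ := hQ
            obtain ⟨y, hya, hyb, hyadj⟩ := hP
            have huniq : ∀ x' y', x' ≠ a → x' ≠ b → H.Adj x' b →
                y' ≠ a → y' ≠ b → H.Adj y' a → x' = y' := by
              intro x' y' h1 h2 h3 h4 h5 h6
              by_contra hne
              exact hab.ne (hdisj x' b y' a h3 h6 hne h1 (Ne.symm h5)).symm
            -- two distinct vertices outside {a, b}
            obtain ⟨c', d', hc'd', hc', hd'⟩ :
                ∃ c' d' : V, c' ≠ d' ∧ c' ∉ ({a, b} : Set V) ∧ d' ∉ ({a, b} : Set V) := by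
              have hle : (Set.univ : Set V).ncard ≤ (({a, b} : Set V)ᶜ).ncard + 2 := by
                have h1 : (Set.univ : Set V) ⊆ ({a, b} : Set V)ᶜ ∪ {a, b} := by
                  intro x _
                  by_cases hx : x ∈ ({a, b} : Set V)
                  · exact Or.inr hx
                  · exact Or.inl hx
                have h2 := Set.ncard_le_ncard h1 (Set.toFinite _)
                have h3 := Set.ncard_union_le (({a, b} : Set V)ᶜ) {a, b}
                have h4 : ({a, b} : Set V).ncard ≤ 2 := by
                  have := Set.ncard_insert_le a ({b} : Set V)
                  simpa using this
                omega
              have h2lt : 1 < (({a, b} : Set V)ᶜ).ncard := by omega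
              obtain ⟨c', d', hc', hd', hne⟩ := (Set.one_lt_ncard_iff (Set.toFinite _)).mp h2lt
              exact ⟨c', d', hne, hc', hd'⟩
            simp only [Set.mem_insert_iff, Set.mem_singleton_iff, not_or] at hc' hd'
            obtain ⟨hc'a, hc'b⟩ := hc'
            obtain ⟨hd'a, hd'b⟩ := hd'
            -- c' and d' are each adjacent to a or b
            obtain ⟨u1, hu1⟩ := factN c'
            obtain ⟨u2, hu2⟩ := factN d'
            rcases hout c' u1 hc'a hc'b hu1 with h1 | h1 <;> rw [h1] at hu1 <;>
              rcases hout d' u2 hd'a hd'b hu2 with h2 | h2 <;> rw [h2] at hu2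
            · exact hc'd' ((huniq x c' hxa hxb hxadj hc'a hc'b hu1).symm.trans
                (huniq x d' hxa hxb hxadj hd'a hd'b hu2))
            · exact hc'd' ((huniq d' c' hd'a hd'b hu2 hc'a hc'b hu1).symm)
            · exact hc'd' (huniq c' d' hc'a hc'b hu1 hd'a hd'b hu2)
            · exact hc'd' ((huniq c' y hc'a hc'b hu1 hya hyb hyadj).trans
                (huniq d' y hd'a hd'b hu2 hya hyb hyadj).symm)
          · push_neg at hP
            refine ⟨b, ?_⟩
            intro x u hxb hadj'
            by_cases hxa : x = a
            · subst hxa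
              by_contra hub
              exact hP u (Ne.symm hadj'.ne) hub hadj'.symm
            · rcases hout x u hxa hxb hadj' with rfl | rfl
              · exact absurd hadj' (hP x hxa hxb)
              · rfl
        · push_neg at hQ
          refine ⟨a, ?_⟩
          intro x u hxa hadj'
          by_cases hxb : x = b
          · subst hxb
            by_contra hua
            exact hQ u hua (Ne.symm hadj'.ne) hadj'.symm
          · rcases hout x u hxa hxb hadj' with rfl | rfl
            · rfl
            · exact absurd hadj' (hQ x hxa hxb)
      obtain ⟨z, hz⟩ := hstar
      -- three distinct vertices different from z
      obtain ⟨v1, v2, v3, hv1, hv2, hv3, h12, h13, h23⟩ :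
          ∃ v1 v2 v3 : V, v1 ≠ z ∧ v2 ≠ z ∧ v3 ≠ z ∧ v1 ≠ v2 ∧ v1 ≠ v3 ∧ v2 ≠ v3 := by
        have h3le : 3 ≤ (({z} : Set V)ᶜ).ncard := by
          have h1 : (Set.univ : Set V) ⊆ ({z} : Set V)ᶜ ∪ {z} := by
            intro x _
            by_cases hx : x ∈ ({z} : Set V)
            · exact Or.inr hx
            · exact Or.inl hx
          have h2 := Set.ncard_le_ncard h1 (Set.toFinite _)
          have h3 := Set.ncard_union_le (({z} : Set V)ᶜ) {z}
          have h4 : ({z} : Set V).ncard = 1 := Set.ncard_singleton z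
          omega
        obtain ⟨p, hp⟩ := (Set.ncard_pos (Set.toFinite _)).mp
          (show 0 < (({z} : Set V)ᶜ).ncard by omega)
        have hdiff : 1 < ((({z} : Set V)ᶜ) \ {p}).ncard := by
          have := Set.ncard_diff_singleton_add_one hp (Set.toFinite _)
          omega
        obtain ⟨q, r, hq, hr, hqr⟩ := (Set.one_lt_ncard_iff (Set.toFinite _)).mp hdiff
        obtain ⟨hq1, hq2⟩ := hq
        obtain ⟨hr1, hr2⟩ := hr
        refine ⟨p, q, r, by simpa using hp, by simpa using hq1, by simpa using hr1, ?_, ?_, hqr⟩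
        · exact fun h => hq2 (Set.mem_singleton_iff.mpr h.symm)
        · exact fun h => hr2 (Set.mem_singleton_iff.mpr h.symm)
      -- the B sets
      have hB : ∀ v : V, v ≠ z → minDeg G ≤ ({e | e ∈ F ∧ v ∈ e ∧ z ∉ e}).ncard + 1 := by
        intro v hvz
        have hmap : ∀ u ∈ G.neighborSet v \ {z},
            (fun u => s(v, u)) u ∈ {e | e ∈ F ∧ v ∈ e ∧ z ∉ e} := by
          intro u hu
          obtain ⟨hadj, huz⟩ := hu
          rw [Set.mem_singleton_iff] at huz
          have hmemF : s(v, u) ∈ F := by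
            by_contra hf
            exact huz (hz v u hvz (deleteEdges_adj.mpr ⟨hadj, hf⟩))
          refine ⟨hmemF, Sym2.mem_iff.mpr (Or.inl rfl), ?_⟩
          intro hzmem
          rcases Sym2.mem_iff.mp hzmem with h | h
          · exact hvz h.symm
          · exact huz h.symm
        have hinj : Set.InjOn (fun u => s(v, u)) (G.neighborSet v \ {z}) :=
          fun u _ u' _ h => Sym2.congr_right.mp h
        have hle1 := Set.ncard_le_ncard_of_injOn _ hmap hinj (Set.toFinite _)
        have hle2 : (G.neighborSet v).ncard ≤ (G.neighborSet v \ {z}).ncard + 1 := by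
          by_cases hzN : z ∈ G.neighborSet v
          · rw [Set.ncard_diff_singleton_add_one hzN (Set.toFinite _)]
          · rw [Set.diff_singleton_eq_self hzN]
            omega
        have := hminle v
        rw [degN] at this
        omega
      have hB1 := hB v1 hv1
      have hB2 := hB v2 hv2
      have hB3 := hB v3 hv3
      set B1 : Set (Sym2 V) := {e | e ∈ F ∧ v1 ∈ e ∧ z ∉ e} with hB1def
      set B2 : Set (Sym2 V) := {e | e ∈ F ∧ v2 ∈ e ∧ z ∉ e} with hB2def
      set B3 : Set (Sym2 V) := {e | e ∈ F ∧ v3 ∈ e ∧ z ∉ e} with hB3def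
      have htrip : ∀ e : Sym2 V, e ∈ B1 → e ∈ B2 → e ∈ B3 → False := by
        intro e he1 he2 he3
        induction e using Sym2.ind with
        | _ p q =>
          obtain ⟨-, hm1, -⟩ := he1
          obtain ⟨-, hm2, -⟩ := he2
          obtain ⟨-, hm3, -⟩ := he3
          rw [Sym2.mem_iff] at hm1 hm2 hm3
          rcases hm1 with rfl | rfl <;> rcases hm2 with rfl | rfl <;>
            rcases hm3 with rfl | rfl <;>
            first
            | exact h12 rfl
            | exact h13 rfl
            | exact h23 rfl
      have hBsum : B1.ncard + B2.ncard + B3.ncard ≤ 2 * F.ncard := by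
        have hsubF : B1 ∪ B2 ∪ B3 ⊆ F := by
          rintro e ((he | he) | he) <;> exact he.1
        have hUF := Set.ncard_le_ncard hsubF (Set.toFinite _)
        have e1 := Set.ncard_union_add_ncard_inter B1 B2 (Set.toFinite _) (Set.toFinite _)
        have e2 := Set.ncard_union_add_ncard_inter (B1 ∪ B2) B3 (Set.toFinite _) (Set.toFinite _)
        have e3 : ((B1 ∪ B2) ∩ B3).ncard ≤ (B1 ∩ B3).ncard + (B2 ∩ B3).ncard := by
          rw [Set.union_inter_distrib_right]
          exact Set.ncard_union_le _ _
        have d1 : Disjoint (B1 ∩ B2) (B1 ∩ B3) := by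
          rw [Set.disjoint_left]
          rintro e ⟨he1, he2⟩ ⟨-, he3⟩
          exact htrip e he1 he2 he3
        have d2 : Disjoint (B1 ∩ B2) (B2 ∩ B3) := by
          rw [Set.disjoint_left]
          rintro e ⟨he1, he2⟩ ⟨-, he3⟩
          exact htrip e he1 he2 he3
        have d3 : Disjoint (B1 ∩ B3) (B2 ∩ B3) := by
          rw [Set.disjoint_left]
          rintro e ⟨he1, he3⟩ ⟨he2, -⟩
          exact htrip e he1 he2 he3
        have e4 : (B1 ∩ B2).ncard + (B1 ∩ B3).ncard + (B2 ∩ B3).ncard ≤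
            (B1 ∪ B2 ∪ B3).ncard := by
          have hd : Disjoint (B1 ∩ B2) ((B1 ∩ B3) ∪ (B2 ∩ B3)) := by
            rw [Set.disjoint_union_right]
            exact ⟨d1, d2⟩
          have eq1 := Set.ncard_union_eq hd (Set.toFinite _) (Set.toFinite _)
          have eq2 := Set.ncard_union_eq d3 (Set.toFinite _) (Set.toFinite _)
          have hsub : (B1 ∩ B2) ∪ ((B1 ∩ B3) ∪ (B2 ∩ B3)) ⊆ B1 ∪ B2 ∪ B3 := by
            rintro e (⟨h, -⟩ | (⟨h, -⟩ | ⟨h, -⟩))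
            · exact Or.inl (Or.inl h)
            · exact Or.inl (Or.inl h)
            · exact Or.inl (Or.inr h)
          have := Set.ncard_le_ncard hsub (Set.toFinite _)
          omega
        omega
      have hmle1 : minDeg G ≤ 1 := by omega
      have hF0 : F = ∅ := by
        have : F.ncard = 0 := by omega
        exact (Set.ncard_eq_zero (Set.toFinite _)).mp this
      have hHG : H = G := by rw [hHdef, hF0, deleteEdges_empty]
      rw [hHG] at hz
      obtain ⟨p1, q1, hadj1, hp1, hq1⟩ := hedge_in_comp v0
      obtain ⟨p2, q2, hadj2, hp2, hq2⟩ := hedge_in_comp w0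
      have hz1 : z ∈ (GS.connectedComponentMk v0).supp := by
        by_cases h : p1 = z
        · exact h ▸ hp1
        · exact (hz p1 q1 h hadj1) ▸ hq1
      have hz2 : z ∈ (GS.connectedComponentMk w0).supp := by
        by_cases h : p2 = z
        · exact h ▸ hp2
        · exact (hz p2 q2 h hadj2) ▸ hq2
      exact Set.disjoint_left.mp hsuppdisj hz1 hz2
  · refine ⟨∅, Set.empty_subset _, ?_, ?_⟩
    · rw [deleteEdges_empty]
      exact hHconn
    · apply comp_ge2
      intro v
      obtain ⟨u, hu⟩ := factN v
      exact ⟨u, by rw [deleteEdges_empty]; exact hu⟩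
end

section
/- Let G be a finite simple connected super-λ' graph. If G is not λ''-connected, then ρ'(G) = δ(G) − 1, where δ(G) is the minimum degree of G. -/
open SimpleGraph

variable {V : Type*}

section Aux

set_option linter.unusedSectionVars false

variable {V : Type*} [Fintype V]

/-- The set of edges of `H` with exactly one endpoint in `X`. -/
private def cutS (H : SimpleGraph V) (X : Set V) : Set (Sym2 V) :=
  {e ∈ H.edgeSet | ∃ x ∈ X, ∃ y ∈ Xᶜ, e = s(x, y)}

private lemma dOut_eq (H : SimpleGraph V) (X : Set V) : dOut H X = (cutS H X).ncard := rfl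

private lemma exists_adj_of_reachable {W : Type*} {H : SimpleGraph W} {u w : W}
    (h : H.Reachable u w) (hne : u ≠ w) : ∃ v, H.Adj u v := by
  obtain ⟨p⟩ := h
  cases p with
  | nil => exact absurd rfl hne
  | cons h q => exact ⟨_, h⟩

private lemma mem_of_reachable_closed {H : SimpleGraph V} {X : Set V}
    (hX : ∀ a ∈ X, ∀ b, H.Adj a b → b ∈ X) :
    ∀ {a b : V}, H.Reachable a b → a ∈ X → b ∈ X := by
  intro a b h
  obtain ⟨p⟩ := h
  induction p with
  | nil => exact fun ha => ha
  | cons h q ih => exact fun ha => ih (hX _ ha _ h)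

private lemma exists_cross_adj {H : SimpleGraph V} {X : Set V} :
    ∀ {a b : V}, H.Reachable a b → a ∈ X → b ∉ X → ∃ u ∈ X, ∃ w, w ∉ X ∧ H.Adj u w := by
  intro a b h
  obtain ⟨p⟩ := h
  induction p with
  | nil => exact fun ha hb => absurd ha hb
  | @cons u v w h q ih =>
    intro ha hb
    by_cases hv : v ∈ X
    · exact ih hv hb
    · exact ⟨u, ha, v, hv, h⟩

private lemma sym2_three {e : Sym2 V} {a b c : V} (ha : a ∈ e) (hb : b ∈ e) (hc : c ∈ e) :
    a = b ∨ a = c ∨ b = c := by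
  induction e with
  | _ x y =>
    simp only [Sym2.mem_iff] at ha hb hc
    rcases ha with rfl | rfl <;> rcases hb with rfl | rfl <;> rcases hc with rfl | rfl <;> tauto

private lemma mem_cutS {H : SimpleGraph V} {X : Set V} {a b : V}
    (hadj : H.Adj a b) (ha : a ∈ X) (hb : b ∉ X) : s(a, b) ∈ cutS H X :=
  ⟨H.mem_edgeSet.mpr hadj, a, ha, b, hb, rfl⟩

private lemma cutS_cases {H : SimpleGraph V} {X : Set V} {e : Sym2 V} (he : e ∈ cutS H X) :
    ∃ a b, a ∈ X ∧ b ∉ X ∧ H.Adj a b ∧ e = s(a, b) := by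
  obtain ⟨he1, a, ha, b, hb, rfl⟩ := he
  exact ⟨a, b, ha, hb, H.mem_edgeSet.mp he1, rfl⟩

private lemma not_mem_cutS_same {H : SimpleGraph V} {X : Set V} {a b : V}
    (h : (a ∈ X ∧ b ∈ X) ∨ (a ∉ X ∧ b ∉ X)) : s(a, b) ∉ cutS H X := by
  intro hmem
  obtain ⟨u, w, hu, hw, _, heq⟩ := cutS_cases hmem
  rw [Sym2.eq_iff] at heq
  rcases heq with ⟨rfl, rfl⟩ | ⟨rfl, rfl⟩ <;> tauto

private lemma cutS_compl (H : SimpleGraph V) (X : Set V) : cutS H Xᶜ = cutS H X := by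
  ext e
  constructor
  · intro he
    obtain ⟨a, b, ha, hb, hadj, rfl⟩ := cutS_cases he
    rw [Sym2.eq_swap]
    exact mem_cutS hadj.symm (by simpa using hb) (by simpa using ha)
  · intro he
    obtain ⟨a, b, ha, hb, hadj, rfl⟩ := cutS_cases he
    rw [Sym2.eq_swap]
    exact mem_cutS hadj.symm (by simpa using hb) (by simpa using ha)

private lemma adj_delete_cutS {H : SimpleGraph V} {X : Set V} {a b : V}
    (hadj : H.Adj a b) (h : (a ∈ X ∧ b ∈ X) ∨ (a ∉ X ∧ b ∉ X)) :
    (H.deleteEdges (cutS H X)).Adj a b :=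
  deleteEdges_adj.mpr ⟨hadj, not_mem_cutS_same h⟩

private lemma cutS_closed {H : SimpleGraph V} {X : Set V} :
    ∀ a ∈ X, ∀ b, (H.deleteEdges (cutS H X)).Adj a b → b ∈ X := by
  intro a ha b hab
  rw [deleteEdges_adj] at hab
  by_contra hb
  exact hab.2 (mem_cutS hab.1 ha hb)

private lemma not_connected_delete_cutS {H : SimpleGraph V} {X : Set V} {x y : V}
    (hx : x ∈ X) (hy : y ∉ X) : ¬(H.deleteEdges (cutS H X)).Connected := by
  intro hc
  exact hy (mem_of_reachable_closed cutS_closed (hc.preconnected x y) hx)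

private lemma one_lt_supp {H : SimpleGraph V} {v u : V} (h : H.Adj v u) :
    1 < (H.connectedComponentMk v).supp.ncard := by
  rw [Set.one_lt_ncard (Set.toFinite _)]
  exact ⟨v, (ConnectedComponent.mem_supp_iff _ _).mpr rfl, u,
    (ConnectedComponent.mem_supp_iff _ _).mpr (ConnectedComponent.sound h.symm.reachable), h.ne⟩

private lemma dOut_pair {H : SimpleGraph V} {x y : V} (hxy : H.Adj x y) :
    dOut H {x, y} = degN H x + degN H y - 2 := by
  have hne := hxy.ne
  have hset : cutS H {x, y} =
      (fun b => s(x, b)) '' (H.neighborSet x \ {y}) ∪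
        (fun b => s(y, b)) '' (H.neighborSet y \ {x}) := by
    ext e
    constructor
    · intro he
      obtain ⟨a, b, ha, hb, hadj, rfl⟩ := cutS_cases he
      have hbx : b ≠ x := fun h => hb (by simp [h])
      have hby : b ≠ y := fun h => hb (by simp [h])
      rcases ha with rfl | rfl
      · exact Or.inl ⟨b, ⟨hadj, hby⟩, rfl⟩
      · exact Or.inr ⟨b, ⟨hadj, hbx⟩, rfl⟩
    · rintro (⟨b, ⟨hb1, hb2⟩, rfl⟩ | ⟨b, ⟨hb1, hb2⟩, rfl⟩)
      · have hb1' : H.Adj x b := hb1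
        have hbny : b ≠ y := fun h => hb2 (by simp [h])
        refine mem_cutS hb1' (by simp) ?_
        intro hmem
        rcases hmem with h | h
        · exact hb1'.ne' h
        · exact hbny h
      · have hb1' : H.Adj y b := hb1
        have hbnx : b ≠ x := fun h => hb2 (by simp [h])
        refine mem_cutS hb1' (by simp) ?_
        intro hmem
        rcases hmem with h | h
        · exact hbnx h
        · exact hb1'.ne' h
  have hinjx : Function.Injective (fun b : V => s(x, b)) := fun a b h => Sym2.congr_right.mp h
  have hinjy : Function.Injective (fun b : V => s(y, b)) := fun a b h => Sym2.congr_right.mp h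
  have hdisj : Disjoint ((fun b => s(x, b)) '' (H.neighborSet x \ {y}))
      ((fun b => s(y, b)) '' (H.neighborSet y \ {x})) := by
    rw [Set.disjoint_left]
    rintro e ⟨b, ⟨hb1, hb2⟩, rfl⟩ ⟨b', ⟨hb1', hb2'⟩, heq⟩
    rw [Sym2.eq_iff] at heq
    rcases heq with ⟨h1, h2⟩ | ⟨h1, h2⟩
    · exact hne h1.symm
    · exact hb2 (Set.mem_singleton_iff.mpr h1.symm)
  have hx1 : 0 < degN H x := (Set.ncard_pos (Set.toFinite _)).mpr ⟨y, hxy⟩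
  have hy1 : 0 < degN H y := (Set.ncard_pos (Set.toFinite _)).mpr ⟨x, hxy.symm⟩
  rw [dOut_eq, hset, Set.ncard_union_eq hdisj (Set.toFinite _) (Set.toFinite _),
    Set.ncard_image_of_injective _ hinjx, Set.ncard_image_of_injective _ hinjy,
    Set.ncard_diff_singleton_of_mem (show y ∈ H.neighborSet x from hxy),
    Set.ncard_diff_singleton_of_mem (show x ∈ H.neighborSet y from hxy.symm)]
  show degN H x - 1 + (degN H y - 1) = _
  omega

private lemma degN_le_dOut {H : SimpleGraph V} {X : Set V} {v : V}
    (hv : v ∈ X) (h : ∀ u ∈ X, ¬H.Adj v u) : degN H v ≤ dOut H X := by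
  rw [degN, dOut_eq]
  apply Set.ncard_le_ncard_of_injOn (fun u => s(v, u))
  · intro u hu
    have hu' : H.Adj v u := hu
    exact mem_cutS hu' hv (fun hmem => h u hmem hu')
  · intro a _ b _ hab
    exact Sym2.congr_right.mp hab

private lemma minDeg_le (G : SimpleGraph V) (v : V) : minDeg G ≤ degN G v :=
  Nat.sInf_le ⟨v, rfl⟩

private lemma exists_minDeg (G : SimpleGraph V) [Nonempty V] : ∃ v, degN G v = minDeg G :=
  Nat.sInf_mem (s := {k | ∃ v, degN G v = k}) ⟨degN G (Classical.arbitrary V), _, rfl⟩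

private lemma four_distinct {G : SimpleGraph V} (h : LambdaConn G 1) (hc : G.Connected) :
    ∃ a b c d : V, a ≠ b ∧ a ≠ c ∧ a ≠ d ∧ b ≠ c ∧ b ≠ d ∧ c ≠ d := by
  obtain ⟨F, hFsub, hFdis, hFbig⟩ := h
  haveI := hc.nonempty
  set H := G.deleteEdges F
  have hex : ∃ a b : V, ¬H.Reachable a b := by
    by_contra hall
    push_neg at hall
    exact hFdis ⟨fun u v => hall u v⟩
  obtain ⟨a, b, hab⟩ := hex
  have hA := hFbig (H.connectedComponentMk a)
  have hB := hFbig (H.connectedComponentMk b)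
  rw [Set.one_lt_ncard (Set.toFinite _)] at hA hB
  obtain ⟨a1, ha1, a2, ha2, hne1⟩ := hA
  obtain ⟨b1, hb1, b2, hb2, hne2⟩ := hB
  rw [ConnectedComponent.mem_supp_iff] at ha1 ha2 hb1 hb2
  have hra1 : H.Reachable a1 a := ConnectedComponent.exact ha1
  have hra2 : H.Reachable a2 a := ConnectedComponent.exact ha2
  have hrb1 : H.Reachable b1 b := ConnectedComponent.exact hb1
  have hrb2 : H.Reachable b2 b := ConnectedComponent.exact hb2
  have key : ∀ x y : V, H.Reachable x a → H.Reachable y b → x ≠ y := by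
    rintro x y hx hy rfl
    exact hab (hx.symm.trans hy)
  exact ⟨a1, a2, b1, b2, hne1, key a1 b1 hra1 hrb1, key a1 b2 hra1 hrb2,
    key a2 b1 hra2 hrb1, key a2 b2 hra2 hrb2, hne2⟩

private lemma exists_fourth {a b c d : V}
    (h4 : a ≠ b ∧ a ≠ c ∧ a ≠ d ∧ b ≠ c ∧ b ≠ d ∧ c ≠ d) (x y z : V) :
    ∃ w, w ≠ x ∧ w ≠ y ∧ w ≠ z := by
  obtain ⟨h1, h2, h3, h4', h5, h6⟩ := h4
  by_contra hcon
  push_neg at hcon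
  have ha : a = x ∨ a = y ∨ a = z := by
    by_cases e1 : a = x
    · tauto
    by_cases e2 : a = y
    · tauto
    exact Or.inr (Or.inr (hcon a e1 e2))
  have hb : b = x ∨ b = y ∨ b = z := by
    by_cases e1 : b = x
    · tauto
    by_cases e2 : b = y
    · tauto
    exact Or.inr (Or.inr (hcon b e1 e2))
  have hc : c = x ∨ c = y ∨ c = z := by
    by_cases e1 : c = x
    · tauto
    by_cases e2 : c = y
    · tauto
    exact Or.inr (Or.inr (hcon c e1 e2))
  have hd : d = x ∨ d = y ∨ d = z := by
    by_cases e1 : d = x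
    · tauto
    by_cases e2 : d = y
    · tauto
    exact Or.inr (Or.inr (hcon d e1 e2))
  rcases ha with rfl | rfl | rfl <;> rcases hb with rfl | rfl | rfl <;>
    rcases hc with rfl | rfl | rfl <;> rcases hd with rfl | rfl | rfl <;> tauto

private lemma three_ne {a b c d : V}
    (h4 : a ≠ b ∧ a ≠ c ∧ a ≠ d ∧ b ≠ c ∧ b ≠ d ∧ c ≠ d) (x : V) :
    ∃ p q r : V, p ≠ q ∧ p ≠ r ∧ q ≠ r ∧ p ≠ x ∧ q ≠ x ∧ r ≠ x := by
  obtain ⟨h1, h2, h3, h4', h5, h6⟩ := h4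
  by_cases hxa : x = a
  · subst hxa
    exact ⟨b, c, d, h4', h5, h6, Ne.symm h1, Ne.symm h2, Ne.symm h3⟩
  by_cases hxb : x = b
  · subst hxb
    exact ⟨a, c, d, h2, h3, h6, Ne.symm hxa, Ne.symm h4', Ne.symm h5⟩
  by_cases hxc : x = c
  · subst hxc
    exact ⟨a, b, d, h1, h3, h5, Ne.symm hxa, Ne.symm hxb, Ne.symm h6⟩
  exact ⟨a, b, c, h1, h2, h4', Ne.symm hxa, Ne.symm hxb, Ne.symm hxc⟩

private lemma adj_of_induce_pair {H : SimpleGraph V} {x y : V} (hne : x ≠ y)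
    (hc : (H.induce {x, y}).Connected) : H.Adj x y := by
  have hx : x ∈ ({x, y} : Set V) := by simp
  have hy : y ∈ ({x, y} : Set V) := by simp
  have hr := hc.preconnected ⟨x, hx⟩ ⟨y, hy⟩
  have hne' : (⟨x, hx⟩ : ({x, y} : Set V)) ≠ ⟨y, hy⟩ := by
    simp [Subtype.ext_iff, hne]
  obtain ⟨v, hadj⟩ := exists_adj_of_reachable hr hne'
  have hv2 : (v : V) ∈ ({x, y} : Set V) := v.2
  have hadj' : H.Adj x (v : V) := hadj
  rcases hv2 with hvx | hvy
  · exact absurd hvx hadj'.ne'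
  · rw [Set.mem_singleton_iff] at hvy
    rw [← hvy]
    exact hadj'

private lemma myInducePairConn {H : SimpleGraph V} {x y : V} (h : H.Adj x y) :
    (H.induce {x, y}).Connected := by
  rw [connected_iff]
  constructor
  · rintro ⟨a, ha⟩ ⟨b, hb⟩
    have step : ∀ u (hu : u ∈ ({x, y} : Set V)) v (hv : v ∈ ({x, y} : Set V)),
        (H.induce {x, y}).Reachable ⟨u, hu⟩ ⟨v, hv⟩ := by
      intro u hu v hv
      rcases hu with rfl | hu <;> rcases hv with rfl | hv
      · rfl
      · rw [Set.mem_singleton_iff] at hv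
        subst hv
        exact Adj.reachable (by exact h)
      · rw [Set.mem_singleton_iff] at hu
        subst hu
        exact Adj.reachable (by exact h.symm)
      · rw [Set.mem_singleton_iff] at hu hv
        subst hu; subst hv
        rfl
    exact step a ha b hb
  · exact ⟨⟨x, by simp⟩⟩

private lemma xiH_le_of_adj {H : SimpleGraph V} {x y : V} (h : H.Adj x y) :
    xiH H 1 ≤ degN H x + degN H y - 2 :=
  Nat.sInf_le ⟨{x, y}, by rw [Set.ncard_pair h.ne],
    myInducePairConn h, dOut_pair h⟩

private lemma xiH_spec {H : SimpleGraph V} (hedge : ∃ x y, H.Adj x y) :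
    ∃ x y, H.Adj x y ∧ degN H x + degN H y - 2 = xiH H 1 := by
  obtain ⟨x0, y0, h0⟩ := hedge
  have hmem : xiH H 1 ∈ {k | ∃ X : Set V, X.ncard = 1 + 1 ∧ (H.induce X).Connected ∧
      dOut H X = k} :=
    Nat.sInf_mem ⟨degN H x0 + degN H y0 - 2, {x0, y0}, by rw [Set.ncard_pair h0.ne],
      myInducePairConn h0, dOut_pair h0⟩
  obtain ⟨X, hX2, hXc, hXd⟩ := hmem
  obtain ⟨x, y, hne, rfl⟩ := Set.ncard_eq_two.mp (by simpa using hX2)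
  have hadj := adj_of_induce_pair hne hXc
  exact ⟨x, y, hadj, by rw [← hXd, dOut_pair hadj]⟩

private lemma exists_edge {H : SimpleGraph V} (hc : H.Connected) {a b : V} (hab : a ≠ b) :
    ∃ x y, H.Adj x y := by
  obtain ⟨v, h⟩ := exists_adj_of_reachable (hc.preconnected a b) hab
  exact ⟨a, v, h⟩

private lemma minDeg_pos {G : SimpleGraph V} (hc : G.Connected) (hlc : LambdaConn G 1) :
    1 ≤ minDeg G := by
  haveI := hc.nonempty
  obtain ⟨v, hv⟩ := exists_minDeg G
  obtain ⟨a, b, c, d, hd⟩ := four_distinct hlc hc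
  obtain ⟨w, hw, -, -⟩ := exists_fourth hd v v v
  obtain ⟨u, hu⟩ := exists_adj_of_reachable (hc.preconnected v w) (Ne.symm hw)
  rw [← hv]
  exact (Set.ncard_pos (Set.toFinite _)).mpr ⟨u, hu⟩

private lemma S1 {G : SimpleGraph V} (hs : SuperLambda G 1) {X : Set V}
    (hX : X.Nonempty) (hXc : Xᶜ.Nonempty) : minDeg G ≤ dOut G X := by
  obtain ⟨hconn, hlc, hlam, -⟩ := hs
  by_contra hlt
  push_neg at hlt
  obtain ⟨x0, hx0⟩ := hX
  obtain ⟨y0, hy0⟩ := hXc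
  obtain ⟨u, hu, w, hw, huw⟩ := exists_cross_adj (hconn.preconnected x0 y0) hx0 hy0
  have hpos : 0 < dOut G X := by
    rw [dOut_eq]
    exact (Set.ncard_pos (Set.toFinite _)).mpr ⟨s(u, w), mem_cutS huw hu hw⟩
  by_cases hδ : minDeg G ≤ 1
  · omega
  by_cases hcase : ∃ v ∈ X, ∀ u' ∈ X, ¬G.Adj v u'
  · obtain ⟨v, hv, hno⟩ := hcase
    have h1 := degN_le_dOut hv hno
    have h2 := minDeg_le G v
    omega
  by_cases hcase2 : ∃ v ∈ Xᶜ, ∀ u' ∈ Xᶜ, ¬G.Adj v u'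
  · obtain ⟨v, hv, hno⟩ := hcase2
    have h1 := degN_le_dOut hv hno
    have heq : dOut G Xᶜ = dOut G X := by rw [dOut_eq, dOut_eq, cutS_compl]
    have h2 := minDeg_le G v
    omega
  push_neg at hcase hcase2
  have hcut : IsExtraEdgeCut G 1 (cutS G X) := by
    refine ⟨fun e he => he.1, not_connected_delete_cutS hx0 hy0, ?_⟩
    intro c
    induction c using ConnectedComponent.ind with
    | _ v =>
      by_cases hvX : v ∈ X
      · obtain ⟨u', hu'X, hadj⟩ := hcase v hvX
        exact one_lt_supp (adj_delete_cutS hadj (Or.inl ⟨hvX, hu'X⟩))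
      · obtain ⟨u', hu'X, hadj⟩ := hcase2 v hvX
        exact one_lt_supp (adj_delete_cutS hadj (Or.inr ⟨hvX, hu'X⟩))
  have hle : lambdaH G 1 ≤ dOut G X := Nat.sInf_le ⟨cutS G X, hcut, (dOut_eq _ _).symm⟩
  obtain ⟨a, b, -, -, hab, -, -, -⟩ := four_distinct hlc hconn
  obtain ⟨x, y, hxyA, hxyE⟩ := xiH_spec (exists_edge hconn hab)
  have h1 := minDeg_le G x
  have h2 := minDeg_le G y
  rw [hlam] at hle
  omega

private lemma star_contra {G : SimpleGraph V} (hGconn : G.Connected) (hGlc : LambdaConn G 1)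
    {F : Set (Sym2 V)} (hFcard : F.ncard ≤ minDeg G - 1) {x : V}
    (hstar : ∀ w, w ≠ x → (G.deleteEdges F).neighborSet w = {x}) : False := by
  haveI := hGconn.nonempty
  have h4 := four_distinct hGlc hGconn
  obtain ⟨a4, b4, c4, d4, hd4⟩ := h4
  have hleaf : ∀ ℓ, ℓ ≠ x → minDeg G - 1 ≤ {e ∈ F | ℓ ∈ e}.ncard := by
    intro ℓ hℓ
    have hsub : (G.deleteEdges F).neighborSet ℓ ⊆ G.neighborSet ℓ := by
      intro u hu
      exact (deleteEdges_adj.mp hu).1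
    have hdiff : (G.neighborSet ℓ \ (G.deleteEdges F).neighborSet ℓ).ncard =
        degN G ℓ - degN (G.deleteEdges F) ℓ :=
      Set.ncard_diff hsub (Set.toFinite _)
    have hinj : (G.neighborSet ℓ \ (G.deleteEdges F).neighborSet ℓ).ncard ≤
        {e ∈ F | ℓ ∈ e}.ncard := by
      apply Set.ncard_le_ncard_of_injOn (fun u => s(ℓ, u))
      · rintro u ⟨hu1, hu2⟩
        have hu1' : G.Adj ℓ u := hu1
        have : s(ℓ, u) ∈ F := by
          by_contra hne
          exact hu2 (deleteEdges_adj.mpr ⟨hu1', hne⟩)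
        exact ⟨this, Sym2.mem_mk_left ℓ u⟩
      · intro a _ b _ hab
        exact Sym2.congr_right.mp hab
    have h1 : degN (G.deleteEdges F) ℓ = 1 := by
      rw [degN, hstar ℓ hℓ, Set.ncard_singleton]
    have h2 := minDeg_le G ℓ
    omega
  by_cases hδ : 2 ≤ minDeg G
  · obtain ⟨p, q, r, hpq, hpr, hqr, hpx, hqx, hrx⟩ := three_ne hd4 x
    have hfull : ∀ ℓ, ℓ ≠ x → {e ∈ F | ℓ ∈ e} = F := by
      intro ℓ hℓ
      apply Set.eq_of_subset_of_ncard_le (Set.sep_subset _ _)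
      have := hleaf ℓ hℓ
      omega
    have hFne : F.Nonempty := by
      rw [← Set.ncard_pos (Set.toFinite _)]
      have h1 := hleaf p hpx
      have h2 : {e ∈ F | p ∈ e}.ncard ≤ F.ncard :=
        Set.ncard_le_ncard (Set.sep_subset _ _) (Set.toFinite _)
      omega
    obtain ⟨e, heF⟩ := hFne
    have hp : p ∈ e := ((hfull p hpx) ▸ heF).2
    have hq : q ∈ e := ((hfull q hqx) ▸ heF).2
    have hr : r ∈ e := ((hfull r hrx) ▸ heF).2
    rcases sym2_three hp hq hr with h | h | h
    · exact hpq h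
    · exact hpr h
    · exact hqr h
  · have hF0 : F.ncard = 0 := by omega
    have hFe : F = ∅ := (Set.ncard_eq_zero (Set.toFinite _)).mp hF0
    have hG : G.deleteEdges F = G := by rw [hFe, deleteEdges_empty]
    rw [hG] at hstar
    obtain ⟨F₁, hF₁sub, hF₁dis, hF₁big⟩ := hGlc
    set H₁ := G.deleteEdges F₁ with hH₁
    have hex : ∃ w, ¬H₁.Reachable x w := by
      by_contra hall
      push_neg at hall
      exact hF₁dis ⟨fun u v => (hall u).symm.trans (hall v)⟩
    obtain ⟨w, hw⟩ := hex
    have hwx : w ≠ x := by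
      intro h
      subst h
      exact hw (Reachable.refl w)
    have hbig := hF₁big (H₁.connectedComponentMk w)
    rw [Set.one_lt_ncard (Set.toFinite _)] at hbig
    obtain ⟨w1, hw1, w2, hw2, hne12⟩ := hbig
    rw [ConnectedComponent.mem_supp_iff] at hw1 hw2
    have hrw : ∃ u, u ≠ w ∧ H₁.Reachable w u := by
      by_cases h1 : w1 = w
      · exact ⟨w2, fun h => hne12 (h1.trans h.symm), (ConnectedComponent.exact hw2).symm⟩
      · exact ⟨w1, h1, (ConnectedComponent.exact hw1).symm⟩
    obtain ⟨u, hu, hru⟩ := hrw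
    obtain ⟨t, ht⟩ := exists_adj_of_reachable hru (fun h => hu h.symm)
    have htG : G.Adj w t := (deleteEdges_adj.mp ht).1
    have htx : t = x := by
      have : t ∈ G.neighborSet w := htG
      rw [hstar w hwx] at this
      exact this
    subst htx
    exact hw ht.symm.reachable

private lemma main_super {G : SimpleGraph V} (hs : SuperLambda G 1) (hnl2 : ¬LambdaConn G 2)
    {F : Set (Sym2 V)} (hFsub : F ⊆ G.edgeSet) (hFcard : F.ncard ≤ minDeg G - 1) :
    SuperLambda (G.deleteEdges F) 1 := by
  have hGconn := hs.1
  have hGlc := hs.2.1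
  have hGlam := hs.2.2.1
  haveI := hGconn.nonempty
  have h4 := four_distinct hGlc hGconn
  obtain ⟨a4, b4, c4, d4, hd4⟩ := h4
  have hδ1 : 1 ≤ minDeg G := minDeg_pos hGconn hGlc
  have hFlt : F.ncard < minDeg G := by omega
  set H := G.deleteEdges F with hH
  -- M1 : H is connected
  have hHconn : H.Connected := by
    rw [connected_iff]
    refine ⟨?_, inferInstance⟩
    intro a b
    by_contra hab
    set X : Set V := {w | H.Reachable a w} with hX
    have haX : a ∈ X := Reachable.refl a
    have hbX : b ∉ X := hab
    have hsubF : cutS G X ⊆ F := by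
      intro e he
      obtain ⟨u, w, huX, hwX, hadj, rfl⟩ := cutS_cases he
      by_contra heF
      exact hwX (huX.trans (Adj.reachable (deleteEdges_adj.mpr ⟨hadj, heF⟩)))
    have hS1 := S1 hs ⟨a, haX⟩ ⟨b, hbX⟩
    have hle : dOut G X ≤ F.ncard := by
      rw [dOut_eq]
      exact Set.ncard_le_ncard hsubF (Set.toFinite _)
    omega
  -- O2 : every 1-extra cut of H leaves a component of order exactly 2
  have hO2 : ∀ F' : Set (Sym2 V), IsExtraEdgeCut H 1 F' →
      ∃ c : (H.deleteEdges F').ConnectedComponent, c.supp.ncard = 2 := by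
    intro F' hF'
    obtain ⟨hF'sub, hF'dis, hF'big⟩ := hF'
    by_contra hno
    push_neg at hno
    apply hnl2
    have hEq : G.deleteEdges (F ∪ F') = H.deleteEdges F' := by
      rw [hH, deleteEdges_deleteEdges]
    refine ⟨F ∪ F', ?_, ?_, ?_⟩
    · intro e he
      rcases he with he | he
      · exact hFsub he
      · have h2 := hF'sub he
        rw [hH, edgeSet_deleteEdges] at h2
        exact h2.1
    · rw [hEq]
      exact hF'dis
    · rw [hEq]
      intro c
      have h1 := hF'big c
      have h2 := hno c
      omega
  -- lower bound : every 1-extra cut of H has at least xiH H 1 edges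
  have hlower : ∀ F' : Set (Sym2 V), IsExtraEdgeCut H 1 F' → xiH H 1 ≤ F'.ncard := by
    intro F' hF'
    obtain ⟨c, hc2⟩ := hO2 F' hF'
    obtain ⟨u, w, huw, hcsupp⟩ := Set.ncard_eq_two.mp hc2
    have huc : u ∈ c.supp := by rw [hcsupp]; exact Or.inl rfl
    have hwc : w ∈ c.supp := by rw [hcsupp]; exact Or.inr rfl
    rw [ConnectedComponent.mem_supp_iff] at huc hwc
    have hreach : (H.deleteEdges F').Reachable u w :=
      ConnectedComponent.exact (huc.trans hwc.symm)
    obtain ⟨v, hadj⟩ := exists_adj_of_reachable hreach huw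
    have hvc : v ∈ c.supp := by
      rw [ConnectedComponent.mem_supp_iff, ← huc]
      exact ConnectedComponent.sound hadj.symm.reachable
    have hvw : v = w := by
      rw [hcsupp] at hvc
      rcases hvc with h | h
      · exact absurd h hadj.ne'
      · exact h
    subst hvw
    have hHadj : H.Adj u v := (deleteEdges_adj.mp hadj).1
    have hsub : cutS H {u, v} ⊆ F' := by
      intro e he
      obtain ⟨p, q, hpX, hqX, hpq, rfl⟩ := cutS_cases he
      by_contra heF'
      have hq : q ∈ c.supp := by
        have hp : p ∈ c.supp := by rw [hcsupp]; exact hpX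
        rw [ConnectedComponent.mem_supp_iff] at hp
        rw [ConnectedComponent.mem_supp_iff, ← hp]
        exact ConnectedComponent.sound (deleteEdges_adj.mpr ⟨hpq, heF'⟩).symm.reachable
      rw [hcsupp] at hq
      exact hqX hq
    have hxile : xiH H 1 ≤ dOut H {u, v} :=
      Nat.sInf_le ⟨{u, v}, by rw [Set.ncard_pair huw], myInducePairConn hHadj, rfl⟩
    have hfin : dOut H {u, v} ≤ F'.ncard := by
      rw [dOut_eq]
      exact Set.ncard_le_ncard hsub (Set.toFinite _)
    omega
  -- O1 : there exists a 1-extra cut of H of size at most xiH H 1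
  have hO1 : ∃ F', IsExtraEdgeCut H 1 F' ∧ F'.ncard ≤ xiH H 1 := by
    obtain ⟨x, y, hxy, hxyval⟩ := xiH_spec (exists_edge hHconn hd4.1)
    have hmin : ∀ a b, H.Adj a b → xiH H 1 ≤ degN H a + degN H b - 2 :=
      fun a b h => xiH_le_of_adj h
    set W : Set V := {w | ∀ u, H.Adj w u → u = x ∨ u = y} with hWdef
    set X : Set V := {x, y} ∪ W with hXdef
    have hxX : x ∈ X := Or.inl (Or.inl rfl)
    have hyX : y ∈ X := Or.inl (Or.inr rfl)
    have hdx1 : 1 ≤ degN H x := (Set.ncard_pos (Set.toFinite _)).mpr ⟨y, hxy⟩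
    have hdy1 : 1 ≤ degN H y := (Set.ncard_pos (Set.toFinite _)).mpr ⟨x, hxy.symm⟩
    by_cases hXall : ∀ v, v ∈ X
    · exfalso
      have hall : ∀ w, w ≠ x → w ≠ y → ∀ u, H.Adj w u → u = x ∨ u = y := by
        intro w h1 h2 u hu
        rcases hXall w with hw | hw
        · rcases hw with h | h
          · exact absurd h h1
          · exact absurd h h2
        · exact hw u hu
      by_cases hA : ∃ z, z ≠ x ∧ z ≠ y ∧ H.Adj z x ∧ H.Adj z y
      · obtain ⟨z, hzx, hzy, hzax, hzay⟩ := hA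
        have hNz : H.neighborSet z = {x, y} := by
          apply Set.Subset.antisymm
          · intro u hu
            exact hall z hzx hzy u hu
          · rintro u (rfl | rfl)
            · exact hzax
            · exact hzay
        have hdz : degN H z = 2 := by rw [degN, hNz, Set.ncard_pair hxy.ne]
        have hminz1 := hmin z x hzax
        have hminz2 := hmin z y hzay
        rw [← hxyval] at hminz1 hminz2
        have hdy2 : degN H y ≤ 2 := by omega
        have hdx2 : degN H x ≤ 2 := by omega
        have hNx : H.neighborSet x = {y, z} := by
          apply (Set.eq_of_subset_of_ncard_le ?_ ?_ (Set.toFinite _)).symm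
          · rintro u (rfl | rfl)
            · exact hxy
            · exact hzax.symm
          · rw [Set.ncard_pair (Ne.symm hzy)]
            exact hdx2
        have hNy : H.neighborSet y = {x, z} := by
          apply (Set.eq_of_subset_of_ncard_le ?_ ?_ (Set.toFinite _)).symm
          · rintro u (rfl | rfl)
            · exact hxy.symm
            · exact hzay.symm
          · rw [Set.ncard_pair (Ne.symm hzx)]
            exact hdy2
        obtain ⟨w, hwx, hwy, hwz⟩ := exists_fourth hd4 x y z
        obtain ⟨u, hu⟩ := exists_adj_of_reachable (hHconn.preconnected w x) hwx
        rcases hall w hwx hwy u hu with h | h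
        · rw [h] at hu
          have hmem : w ∈ H.neighborSet x := hu.symm
          rw [hNx] at hmem
          rcases hmem with h' | h'
          · exact hwy h'
          · exact hwz h'
        · rw [h] at hu
          have hmem : w ∈ H.neighborSet y := hu.symm
          rw [hNy] at hmem
          rcases hmem with h' | h'
          · exact hwx h'
          · exact hwz h'
      · have hA' : ∀ z, z ≠ x → z ≠ y → H.Adj z x → ¬H.Adj z y :=
          fun z h1 h2 ha hb => hA ⟨z, h1, h2, ha, hb⟩
        obtain ⟨z0, hz0x, hz0y, -⟩ := exists_fourth hd4 x y y
        obtain ⟨w0, hw0, -, -⟩ := exists_fourth hd4 z0 z0 z0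
        obtain ⟨u0, hu0⟩ := exists_adj_of_reachable (hHconn.preconnected z0 w0) (Ne.symm hw0)
        have key : ∀ x' y' z' : V, H.Adj x' y' →
            degN H x' + degN H y' - 2 = xiH H 1 →
            (∀ w, w ≠ x' → w ≠ y' → ∀ u, H.Adj w u → u = x' ∨ u = y') →
            (∀ z, z ≠ x' → z ≠ y' → H.Adj z x' → ¬H.Adj z y') →
            z' ≠ x' → z' ≠ y' → H.Adj z' x' → False := by
          intro x' y' z' hxy' hval' hall' hAA hz'x hz'y hadj'
          have hnz'y : ¬H.Adj z' y' := hAA z' hz'x hz'y hadj'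
          have hNz' : H.neighborSet z' = {x'} := by
            apply Set.Subset.antisymm
            · intro u hu
              rcases hall' z' hz'x hz'y u hu with h | h
              · exact h
              · exact absurd (h ▸ hu) hnz'y
            · rintro u rfl
              exact hadj'
          have hdz' : degN H z' = 1 := by rw [degN, hNz', Set.ncard_singleton]
          have hd1x : 1 ≤ degN H x' := (Set.ncard_pos (Set.toFinite _)).mpr ⟨y', hxy'⟩
          have hd1y : 1 ≤ degN H y' := (Set.ncard_pos (Set.toFinite _)).mpr ⟨x', hxy'.symm⟩
          have hminz := hmin z' x' hadj'
          rw [← hval'] at hminz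
          have hdy'1 : degN H y' = 1 := by omega
          have hNy' : H.neighborSet y' = {x'} := by
            apply (Set.eq_of_subset_of_ncard_le ?_ ?_ (Set.toFinite _)).symm
            · rintro u rfl
              exact hxy'.symm
            · rw [Set.ncard_singleton]
              have hh : (H.neighborSet y').ncard = degN H y' := rfl
              omega
          have hstar : ∀ w, w ≠ x' → H.neighborSet w = {x'} := by
            intro w hwx'
            by_cases hwy' : w = y'
            · subst hwy'
              exact hNy'
            · have hsub : H.neighborSet w ⊆ {x'} := by
                intro u hu
                rcases hall' w hwx' hwy' u hu with h | h
                · exact h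
                · exfalso
                  have huadj : H.Adj w u := hu
                  rw [h] at huadj
                  have hmem : w ∈ H.neighborSet y' := huadj.symm
                  rw [hNy'] at hmem
                  exact hwx' hmem
              obtain ⟨t, htw, -, -⟩ := exists_fourth hd4 w w w
              obtain ⟨u, hu⟩ := exists_adj_of_reachable (hHconn.preconnected w t) (Ne.symm htw)
              apply Set.Subset.antisymm hsub
              intro s' hs'
              rw [Set.mem_singleton_iff] at hs'
              rw [hs']
              have h2 : u ∈ ({x'} : Set V) := hsub hu
              rw [Set.mem_singleton_iff] at h2
              rw [← h2]
              exact hu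
          exact star_contra hGconn hGlc hFcard hstar
        rcases hall z0 hz0x hz0y u0 hu0 with h | h
        · rw [h] at hu0
          exact key x y z0 hxy hxyval hall hA' hz0x hz0y hu0
        · rw [h] at hu0
          refine key y x z0 hxy.symm ?_ ?_ ?_ hz0y hz0x hu0
          · omega
          · intro w h1 h2 u hu
            exact (hall w h2 h1 u hu).symm
          · intro z h1 h2 ha hb
            exact hA ⟨z, h2, h1, hb, ha⟩
    · push_neg at hXall
      obtain ⟨v0, hv0⟩ := hXall
      refine ⟨cutS H X, ⟨fun e he => he.1, not_connected_delete_cutS hxX hv0, ?_⟩, ?_⟩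
      · intro c
        induction c using ConnectedComponent.ind with
        | _ v =>
          have hfind : ∃ u, H.Adj v u ∧ ((v ∈ X ∧ u ∈ X) ∨ (v ∉ X ∧ u ∉ X)) := by
            by_cases hvx : v = x
            · subst hvx
              exact ⟨y, hxy, Or.inl ⟨hxX, hyX⟩⟩
            by_cases hvy : v = y
            · subst hvy
              exact ⟨x, hxy.symm, Or.inl ⟨hyX, hxX⟩⟩
            by_cases hvW : v ∈ W
            · obtain ⟨t, htv, -, -⟩ := exists_fourth hd4 v v v
              obtain ⟨u, hu⟩ := exists_adj_of_reachable (hHconn.preconnected v t) (Ne.symm htv)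
              have hvX : v ∈ X := Or.inr hvW
              rcases hvW u hu with h | h
              · rw [h] at hu
                exact ⟨x, hu, Or.inl ⟨hvX, hxX⟩⟩
              · rw [h] at hu
                exact ⟨y, hu, Or.inl ⟨hvX, hyX⟩⟩
            · have hvX : v ∉ X := by
                intro hmem
                rcases hmem with hm | hm
                · rcases hm with h | h
                  · exact hvx h
                  · exact hvy h
                · exact hvW hm
              have hnW : ¬∀ u, H.Adj v u → u = x ∨ u = y := hvW
              push_neg at hnW
              obtain ⟨u, hu, hux, huy⟩ := hnW
              have huX : u ∉ X := by
                intro hmem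
                rcases hmem with hm | hm
                · rcases hm with h | h
                  · exact hux h
                  · exact huy h
                · rcases hm v hu.symm with h | h
                  · exact hvx h
                  · exact hvy h
              exact ⟨u, hu, Or.inr ⟨hvX, huX⟩⟩
          obtain ⟨u, hu, hside⟩ := hfind
          exact one_lt_supp (adj_delete_cutS hu hside)
      · have hsubAB : cutS H X ⊆
            (fun b => s(x, b)) '' (H.neighborSet x ∩ Xᶜ) ∪
              (fun b => s(y, b)) '' (H.neighborSet y ∩ Xᶜ) := by
          intro e he
          obtain ⟨a, b, haX, hbX, hab, rfl⟩ := cutS_cases he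
          have haxy : a = x ∨ a = y := by
            rcases haX with hm | hm
            · exact hm
            · rcases hm b hab with rfl | rfl
              · exact absurd hxX hbX
              · exact absurd hyX hbX
          rcases haxy with rfl | rfl
          · exact Or.inl ⟨b, ⟨hab, hbX⟩, rfl⟩
          · exact Or.inr ⟨b, ⟨hab, hbX⟩, rfl⟩
        have hsubx : H.neighborSet x ∩ Xᶜ ⊆ H.neighborSet x \ {y} := by
          rintro u ⟨h1, h2⟩
          refine ⟨h1, fun h => h2 ?_⟩
          rw [Set.mem_singleton_iff] at h
          rw [h]
          exact hyX
        have hsuby : H.neighborSet y ∩ Xᶜ ⊆ H.neighborSet y \ {x} := by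
          rintro u ⟨h1, h2⟩
          refine ⟨h1, fun h => h2 ?_⟩
          rw [Set.mem_singleton_iff] at h
          rw [h]
          exact hxX
        have h2x : (H.neighborSet x \ {y}).ncard = degN H x - 1 :=
          Set.ncard_diff_singleton_of_mem (show y ∈ H.neighborSet x from hxy)
        have h2y : (H.neighborSet y \ {x}).ncard = degN H y - 1 :=
          Set.ncard_diff_singleton_of_mem (show x ∈ H.neighborSet y from hxy.symm)
        have hc1 : (cutS H X).ncard ≤
            ((fun b => s(x, b)) '' (H.neighborSet x ∩ Xᶜ)).ncard +
              ((fun b => s(y, b)) '' (H.neighborSet y ∩ Xᶜ)).ncard :=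
          le_trans (Set.ncard_le_ncard hsubAB (Set.toFinite _)) (Set.ncard_union_le _ _)
        have hc2 : ((fun b => s(x, b)) '' (H.neighborSet x ∩ Xᶜ)).ncard ≤
            (H.neighborSet x ∩ Xᶜ).ncard := Set.ncard_image_le (Set.toFinite _)
        have hc3 : ((fun b => s(y, b)) '' (H.neighborSet y ∩ Xᶜ)).ncard ≤
            (H.neighborSet y ∩ Xᶜ).ncard := Set.ncard_image_le (Set.toFinite _)
        have hc4 := Set.ncard_le_ncard hsubx (Set.toFinite _)
        have hc5 := Set.ncard_le_ncard hsuby (Set.toFinite _)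
        rw [← hxyval]
        omega
  -- assemble
  obtain ⟨F'0, hF'0cut, hF'0le⟩ := hO1
  refine ⟨hHconn, ⟨F'0, hF'0cut⟩, ?_, ?_⟩
  · apply le_antisymm
    · exact le_trans (Nat.sInf_le ⟨F'0, hF'0cut, rfl⟩) hF'0le
    · have hne : {k | ∃ F', IsExtraEdgeCut H 1 F' ∧ F'.ncard = k}.Nonempty :=
        ⟨F'0.ncard, F'0, hF'0cut, rfl⟩
      obtain ⟨F'', hF''cut, hF''eq⟩ := Nat.sInf_mem hne
      calc xiH H 1 ≤ F''.ncard := hlower F'' hF''cut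
        _ = _ := hF''eq
  · intro F' hF' _
    exact hO2 F' hF'

end Aux

/-- If `G` is super-`λ'` and not `λ''`-connected, then `ρ'(G) = δ(G) - 1`. -/
theorem stmt4 {V : Type*} [Fintype V] (G : SimpleGraph V)
    (hs : SuperLambda G 1) (hnl2 : ¬LambdaConn G 2) :
    rhoH G 1 = minDeg G - 1 := by
  classical
  have hGconn := hs.1
  have hGlc := hs.2.1
  haveI := hGconn.nonempty
  have hd1 : 1 ≤ minDeg G := minDeg_pos hGconn hGlc
  have hmem : minDeg G - 1 ∈ {m : ℕ | ∀ F : Set (Sym2 V), F ⊆ G.edgeSet → F.ncard ≤ m →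
      SuperLambda (G.deleteEdges F) 1} := fun F hF hc => main_super hs hnl2 hF hc
  have hub : ∀ m ∈ {m : ℕ | ∀ F : Set (Sym2 V), F ⊆ G.edgeSet → F.ncard ≤ m →
      SuperLambda (G.deleteEdges F) 1}, m ≤ minDeg G - 1 := by
    intro m hm
    by_contra hgt
    push_neg at hgt
    obtain ⟨v, hv⟩ := exists_minDeg G
    have hcardinc : (G.incidenceSet v).ncard = degN G v := by
      show _ = (G.neighborSet v).ncard
      rw [← Nat.card_coe_set_eq, ← Nat.card_coe_set_eq]
      exact Nat.card_congr (G.incidenceSetEquivNeighborSet v)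
    have hcon := hm (G.incidenceSet v) (G.incidenceSet_subset v)
      (by rw [hcardinc, hv]; omega)
    obtain ⟨a, b, c, d, hd⟩ := four_distinct hGlc hGconn
    obtain ⟨w, hw, -, -⟩ := exists_fourth hd v v v
    obtain ⟨u, hu⟩ := exists_adj_of_reachable (hcon.1.preconnected v w) (Ne.symm hw)
    rw [deleteEdges_adj] at hu
    exact hu.2 (G.mk'_mem_incidenceSet_left_iff.mpr hu.1)
  exact le_antisymm (csSup_le ⟨_, hmem⟩ hub) (le_csSup ⟨_, hub⟩ hmem)
end

section
/- Let G be a finite simple connected graph that is λ''-connected and super-λ'. If the number η(G) of edges of G whose edge-degree equals ξ(G) satisfies η(G) ≥ δ(G), then ρ'(G) ≥ min{λ''(G) − ξ(G) − 1, δ(G) − 1}, where δ(G) is the minimum degree of G. -/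
open SimpleGraph

variable {V : Type*}

namespace Stmt5

def bdry (G : SimpleGraph V) (X : Set V) : Set (Sym2 V) :=
  {e ∈ G.edgeSet | ∃ x ∈ X, ∃ y ∈ Xᶜ, e = s(x, y)}

lemma dOut_eq (G : SimpleGraph V) (X : Set V) : dOut G X = (bdry G X).ncard := rfl

lemma bdry_subset (G : SimpleGraph V) (X : Set V) : bdry G X ⊆ G.edgeSet :=
  fun _ he => he.1

lemma adj_mem_bdry {G : SimpleGraph V} {X : Set V} {x y : V}
    (h : G.Adj x y) (hx : x ∈ X) (hy : y ∉ X) : s(x, y) ∈ bdry G X :=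
  ⟨(G.mem_edgeSet).2 h, x, hx, y, hy, rfl⟩

lemma not_mem_bdry_both {G : SimpleGraph V} {X : Set V} {x y : V}
    (hx : x ∈ X) (hy : y ∈ X) : s(x, y) ∉ bdry G X := by
  rintro ⟨-, a, ha, b, hb, he⟩
  rcases Sym2.eq_iff.1 he with ⟨rfl, rfl⟩ | ⟨rfl, rfl⟩
  · exact hb hy
  · exact hb hx

lemma not_mem_bdry_neither {G : SimpleGraph V} {X : Set V} {x y : V}
    (hx : x ∉ X) (hy : y ∉ X) : s(x, y) ∉ bdry G X := by
  rintro ⟨-, a, ha, b, hb, he⟩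
  rcases Sym2.eq_iff.1 he with ⟨rfl, rfl⟩ | ⟨rfl, rfl⟩
  · exact hx ha
  · exact hy ha

lemma side_of_reachable {G : SimpleGraph V} {X : Set V} {a b : V}
    (h : (G.deleteEdges (bdry G X)).Reachable a b) : a ∈ X ↔ b ∈ X := by
  obtain ⟨w⟩ := h
  induction w with
  | nil => exact Iff.rfl
  | @cons a u b h' p ih =>
    obtain ⟨hadj, hne⟩ := deleteEdges_adj.mp h'
    refine Iff.trans ?_ ih
    constructor
    · intro ha; by_contra hu; exact hne (adj_mem_bdry hadj ha hu)
    · intro hu; by_contra ha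
      rw [Sym2.eq_swap] at hne
      exact hne (adj_mem_bdry hadj.symm hu ha)

lemma reachable_delete_bdry {G : SimpleGraph V} {X : Set V} :
    ∀ {p q : X}, (G.induce X).Walk p q → (G.deleteEdges (bdry G X)).Reachable p.1 q.1 := by
  intro p q w
  induction w with
  | nil => exact Reachable.refl _
  | @cons a u b h' p' ih =>
    have hadj : G.Adj a.1 u.1 := h'
    have : (G.deleteEdges (bdry G X)).Adj a.1 u.1 :=
      deleteEdges_adj.mpr ⟨hadj, not_mem_bdry_both a.2 u.2⟩
    exact this.reachable.trans ih

lemma supp_eq_of_induce_connected {G : SimpleGraph V} {X : Set V}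
    (hc : (G.induce X).Connected) {a : V} (ha : a ∈ X) :
    ((G.deleteEdges (bdry G X)).connectedComponentMk a).supp = X := by
  ext b
  rw [ConnectedComponent.mem_supp_iff, ConnectedComponent.eq]
  constructor
  · intro h; exact (side_of_reachable h).2 ha
  · intro hb
    obtain ⟨w⟩ := hc.preconnected ⟨b, hb⟩ ⟨a, ha⟩
    exact reachable_delete_bdry w

lemma not_connected_delete_bdry {G : SimpleGraph V} {X : Set V} {a b : V}
    (ha : a ∈ X) (hb : b ∉ X) : ¬(G.deleteEdges (bdry G X)).Connected := by
  intro h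
  exact hb ((side_of_reachable (h.preconnected a b)).1 ha)

lemma crossing_mem_of_comp {G : SimpleGraph V} {F : Set (Sym2 V)}
    {c : (G.deleteEdges F).ConnectedComponent} {u w : V}
    (hu : u ∈ c.supp) (hw : w ∉ c.supp) (h : G.Adj u w) : s(u, w) ∈ F := by
  by_contra hne
  refine hw ?_
  rw [ConnectedComponent.mem_supp_iff] at hu ⊢
  rw [← hu]
  exact ConnectedComponent.eq.mpr (deleteEdges_adj.mpr ⟨h, hne⟩).symm.reachable

lemma supp_nonempty {G : SimpleGraph V} (c : G.ConnectedComponent) : c.supp.Nonempty := by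
  refine c.ind (fun v => ?_)
  exact ⟨v, by rw [ConnectedComponent.mem_supp_iff]⟩


lemma bdry_subset_of_supp_eq {G : SimpleGraph V} {F : Set (Sym2 V)}
    {c : (G.deleteEdges F).ConnectedComponent} {X : Set V} (h : c.supp = X) :
    bdry G X ⊆ F := by
  rintro e ⟨he, u, hu, w, hw, rfl⟩
  exact crossing_mem_of_comp (h ▸ hu) (fun hc => hw (h ▸ hc)) ((G.mem_edgeSet).1 he)

lemma bdry_delete_subset (G : SimpleGraph V) (F : Set (Sym2 V)) (X : Set V) :
    bdry (G.deleteEdges F) X ⊆ bdry G X := by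
  rintro e ⟨he, u, hu, w, hw, rfl⟩
  rw [edgeSet_deleteEdges] at he
  exact ⟨he.1, u, hu, w, hw, rfl⟩

lemma sym2_inj (x : V) : Function.Injective (fun w : V => s(x, w)) := by
  intro a b h
  exact Sym2.congr_right.mp h

section cnt
variable [Fintype V]

lemma dOut_delete_le (G : SimpleGraph V) (F : Set (Sym2 V)) (X : Set V) :
    dOut (G.deleteEdges F) X ≤ dOut G X := by
  rw [dOut_eq, dOut_eq]
  exact Set.ncard_le_ncard (bdry_delete_subset G F X) (Set.toFinite _)

lemma degN_pos {G : SimpleGraph V} {x y : V} (h : G.Adj x y) : 1 ≤ degN G x :=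
  (Set.ncard_pos (Set.toFinite _)).2 ⟨y, (G.mem_neighborSet x y).2 h⟩

lemma bdry_pair_eq {G : SimpleGraph V} {x y : V} :
    bdry G {x, y} = (fun w => s(x, w)) '' (G.neighborSet x \ {x, y}) ∪
      (fun w => s(y, w)) '' (G.neighborSet y \ {x, y}) := by
  ext e
  constructor
  · rintro ⟨he, u, hu, w, hw, rfl⟩
    have hadj : G.Adj u w := (G.mem_edgeSet).1 he
    rcases hu with rfl | hu
    · exact Or.inl ⟨w, ⟨(G.mem_neighborSet _ _).2 hadj, hw⟩, rfl⟩
    · rw [Set.mem_singleton_iff] at hu; subst hu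
      exact Or.inr ⟨w, ⟨(G.mem_neighborSet _ _).2 hadj, hw⟩, rfl⟩
  · rintro (⟨w, ⟨hw1, hw2⟩, rfl⟩ | ⟨w, ⟨hw1, hw2⟩, rfl⟩)
    · exact ⟨(G.mem_edgeSet).2 ((G.mem_neighborSet _ _).1 hw1), x, Or.inl rfl, w, hw2, rfl⟩
    · exact ⟨(G.mem_edgeSet).2 ((G.mem_neighborSet _ _).1 hw1), y, Or.inr rfl, w, hw2, rfl⟩

lemma dOut_pair {G : SimpleGraph V} {x y : V} (h : G.Adj x y) :
    dOut G {x, y} = degN G x + degN G y - 2 := by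
  have hxy : x ≠ y := h.ne
  have hdisj : Disjoint ((fun w : V => s(x, w)) '' (G.neighborSet x \ {x, y}))
      ((fun w : V => s(y, w)) '' (G.neighborSet y \ {x, y})) := by
    rw [Set.disjoint_left]
    rintro e ⟨w, ⟨-, hw⟩, rfl⟩ ⟨w', ⟨-, hw'⟩, he⟩
    rcases Sym2.eq_iff.1 he with ⟨h1, -⟩ | ⟨-, h2⟩
    · exact hxy h1.symm
    · exact hw' (Or.inl h2)
  have hxdiff : G.neighborSet x \ {x, y} = G.neighborSet x \ {y} := by
    have : x ∉ G.neighborSet x := by simp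
    rw [show ({x, y} : Set V) = insert x {y} from rfl, Set.diff_insert_of_notMem this]
  have hydiff : G.neighborSet y \ {x, y} = G.neighborSet y \ {x} := by
    have hyy : y ∉ G.neighborSet y := by simp
    rw [Set.pair_comm x y, show ({y, x} : Set V) = insert y {x} from rfl,
      Set.diff_insert_of_notMem hyy]
  have hy_mem : y ∈ G.neighborSet x := (G.mem_neighborSet _ _).2 h
  have hx_mem : x ∈ G.neighborSet y := (G.mem_neighborSet _ _).2 h.symm
  have d1 : 1 ≤ degN G x := degN_pos h
  have d2 : 1 ≤ degN G y := degN_pos h.symm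
  rw [dOut_eq, bdry_pair_eq, Set.ncard_union_eq hdisj (Set.toFinite _) (Set.toFinite _),
    Set.ncard_image_of_injective _ (sym2_inj x), Set.ncard_image_of_injective _ (sym2_inj y),
    hxdiff, hydiff, Set.ncard_diff_singleton_of_mem hy_mem,
    Set.ncard_diff_singleton_of_mem hx_mem]
  show degN G x - 1 + (degN G y - 1) = degN G x + degN G y - 2
  omega

lemma bdry_hub_eq {G : SimpleGraph V} {x : V} {S : Set V}
    (hS : ∀ p ∈ S, G.neighborSet p ⊆ insert x S) :
    bdry G (insert x S) = (fun w : V => s(x, w)) '' (G.neighborSet x \ insert x S) := by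
  ext e
  constructor
  · rintro ⟨he, u, hu, w, hw, rfl⟩
    have hadj : G.Adj u w := (G.mem_edgeSet).1 he
    rcases hu with rfl | hu
    · exact ⟨w, ⟨(G.mem_neighborSet _ _).2 hadj, hw⟩, rfl⟩
    · exact absurd (hS u hu ((G.mem_neighborSet _ _).2 hadj)) hw
  · rintro ⟨w, ⟨hw1, hw2⟩, rfl⟩
    exact ⟨(G.mem_edgeSet).2 ((G.mem_neighborSet _ _).1 hw1), x, Or.inl rfl, w, hw2, rfl⟩

lemma dOut_hub {G : SimpleGraph V} {x : V} {S : Set V}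
    (hS : ∀ p ∈ S, G.neighborSet p ⊆ insert x S) :
    dOut G (insert x S) = (G.neighborSet x \ insert x S).ncard := by
  rw [dOut_eq, bdry_hub_eq hS, Set.ncard_image_of_injective _ (sym2_inj x)]

lemma degN_le_delete_add (G : SimpleGraph V) (F : Set (Sym2 V)) (v : V) :
    degN G v ≤ degN (G.deleteEdges F) v + F.ncard := by
  have hsub : G.neighborSet v ⊆ (G.deleteEdges F).neighborSet v ∪ {w | s(v, w) ∈ F} := by
    intro w hw
    by_cases hF : s(v, w) ∈ F
    · exact Or.inr hF
    · exact Or.inl (((G.deleteEdges F).mem_neighborSet _ _).2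
        (deleteEdges_adj.mpr ⟨(G.mem_neighborSet _ _).1 hw, hF⟩))
  have h1 : degN G v ≤ ((G.deleteEdges F).neighborSet v ∪ {w | s(v, w) ∈ F}).ncard :=
    Set.ncard_le_ncard hsub (Set.toFinite _)
  have h2 := Set.ncard_union_le ((G.deleteEdges F).neighborSet v) {w | s(v, w) ∈ F}
  have h3 : {w | s(v, w) ∈ F}.ncard ≤ F.ncard :=
    Set.ncard_le_ncard_of_injOn (fun w => s(v, w)) (fun a ha => ha)
      (fun a _ b _ h => Sym2.congr_right.mp h) (Set.toFinite _)
  calc degN G v ≤ _ := h1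
    _ ≤ _ := h2
    _ ≤ degN (G.deleteEdges F) v + F.ncard := by
        exact Nat.add_le_add_left h3 _

end cnt

lemma induce_connected_hub {G : SimpleGraph V} {X : Set V} {x : V} (hx : x ∈ X)
    (h : ∀ a ∈ X, a = x ∨ G.Adj x a) : (G.induce X).Connected := by
  rw [connected_iff]
  refine ⟨fun a b => ?_, ⟨⟨x, hx⟩⟩⟩
  have key : ∀ a : X, (G.induce X).Reachable a ⟨x, hx⟩ := by
    rintro ⟨a, ha⟩
    rcases h a ha with rfl | hadj
    · have : (⟨a, ha⟩ : X) = ⟨a, hx⟩ := Subtype.ext rfl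
      rw [this]
    · have h2 : (G.induce X).Adj ⟨a, ha⟩ ⟨x, hx⟩ := hadj.symm
      exact h2.reachable
  exact (key a).trans (key b).symm

lemma induce_pair_connected_of_adj {G : SimpleGraph V} {x y : V} (h : G.Adj x y) :
    (G.induce {x, y}).Connected := by
  refine induce_connected_hub (Or.inl rfl) ?_
  rintro a (rfl | ha)
  · exact Or.inl rfl
  · rw [Set.mem_singleton_iff] at ha; subst ha; exact Or.inr h

lemma adj_of_induce_pair_connected {G : SimpleGraph V} {x y : V} (hxy : x ≠ y)
    (h : (G.induce {x, y}).Connected) : G.Adj x y := by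
  have hx : x ∈ ({x, y} : Set V) := Or.inl rfl
  have hy : y ∈ ({x, y} : Set V) := Or.inr rfl
  have key : ∀ (p q : ({x, y} : Set V)), (G.induce {x, y}).Walk p q →
      p.1 = q.1 ∨ G.Adj x y := by
    intro p q w
    induction w with
    | nil => exact Or.inl rfl
    | @cons a u b h' p' ih =>
      right
      have hadj : G.Adj a.1 u.1 := h'
      have ha := a.2
      have hu := u.2
      rw [Set.mem_insert_iff, Set.mem_singleton_iff] at ha hu
      rcases ha with ha | ha <;> rcases hu with hu2 | hu2 <;> rw [ha, hu2] at hadj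
      · exact absurd rfl hadj.ne
      · exact hadj
      · exact hadj.symm
      · exact absurd rfl hadj.ne
  obtain ⟨w⟩ := h.preconnected ⟨x, hx⟩ ⟨y, hy⟩
  rcases key _ _ w with h1 | h2
  · exact absurd h1 hxy
  · exact h2

lemma exists_adj_in_supp {H : SimpleGraph V} {c : H.ConnectedComponent} :
    ∀ {p q : V}, H.Walk p q → p ≠ q → p ∈ c.supp → ∃ t ∈ c.supp, t ≠ p ∧ H.Adj p t := by
  intro p q w
  induction w with
  | nil => intro h _; exact absurd rfl h
  | @cons u t v h' w' ih =>
    intro hne hu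
    refine ⟨t, ?_, h'.ne', h'⟩
    rw [ConnectedComponent.mem_supp_iff] at hu ⊢
    rw [← hu]
    exact ConnectedComponent.eq.mpr h'.symm.reachable

lemma adj_of_supp_pair {H : SimpleGraph V} {c : H.ConnectedComponent} {a b : V}
    (hsupp : c.supp = {a, b}) (hab : a ≠ b) : H.Adj a b := by
  have ha : a ∈ c.supp := by rw [hsupp]; exact Or.inl rfl
  have hb : b ∈ c.supp := by rw [hsupp]; exact Or.inr rfl
  have hr : H.Reachable a b := by
    rw [ConnectedComponent.mem_supp_iff] at ha hb
    exact ConnectedComponent.eq.1 (ha.trans hb.symm)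
  obtain ⟨w⟩ := hr
  obtain ⟨t, ht, htp, hadj⟩ := exists_adj_in_supp w hab ha
  have : t = b := by
    rw [hsupp] at ht
    rcases ht with h1 | h1
    · exact absurd h1 htp
    · exact h1
  rw [← this]; exact hadj

end Stmt5


namespace Stmt5

lemma sym2_exists_rep {α : Type*} (e : Sym2 α) : ∃ u v, e = s(u, v) := by
  induction e using Sym2.ind with
  | _ u v => exact ⟨u, v, rfl⟩

lemma main {V : Type*} [Fintype V] (G : SimpleGraph V)
    (hl2 : LambdaConn G 2) (hs : SuperLambda G 1) (heta : minDeg G ≤ eta G)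
    (F : Set (Sym2 V)) (hFE : F ⊆ G.edgeSet)
    (hf1 : F.ncard ≤ lambdaH G 2 - xiEdge G - 1)
    (hf2 : F.ncard ≤ minDeg G - 1) :
    SuperLambda (G.deleteEdges F) 1 := by
  classical
  by_cases hF0 : F = ∅
  · rw [hF0, deleteEdges_empty]; exact hs
  have hFfin : F.Finite := Set.toFinite F
  have hf : 1 ≤ F.ncard := by
    have : 0 < F.ncard := (Set.ncard_pos hFfin).2 (Set.nonempty_iff_ne_empty.2 hF0)
    omega
  set f := F.ncard with hfdef
  set δ := minDeg G with hδdef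
  set ξE := xiEdge G with hξdef
  set L2 := lambdaH G 2 with hL2def
  have hKδ : f + 1 ≤ δ := by omega
  have hK2 : f + ξE + 1 ≤ L2 := by omega
  have hdeg : ∀ v, δ ≤ degN G v := fun v => Nat.sInf_le ⟨v, rfl⟩
  set G' := G.deleteEdges F with hG'def
  have hdeg'f : ∀ v, degN G v ≤ degN G' v + f := fun v => degN_le_delete_add G F v
  have hd'pos : ∀ v, 1 ≤ degN G' v := fun v => by have h1 := hdeg v; have h2 := hdeg'f v; omega
  have hG'le : ∀ {a b : V}, G'.Adj a b → G.Adj a b := fun h => (deleteEdges_adj.1 h).1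
  -- |V| ≥ 6
  have hn6 : 6 ≤ (Set.univ : Set V).ncard := by
    obtain ⟨F₂, hF₂E, hF₂nc, hF₂c⟩ := hl2
    obtain ⟨a, b, hab⟩ : ∃ a b, ¬(G.deleteEdges F₂).Reachable a b := by
      by_contra hcon; push_neg at hcon
      haveI : Nonempty V := hs.1.nonempty
      exact hF₂nc ⟨fun a b => hcon a b⟩
    have hcc : (G.deleteEdges F₂).connectedComponentMk a ≠ (G.deleteEdges F₂).connectedComponentMk b :=
      fun h => hab (ConnectedComponent.eq.1 h)
    have hdisj : Disjoint ((G.deleteEdges F₂).connectedComponentMk a).supp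
        ((G.deleteEdges F₂).connectedComponentMk b).supp := by
      rw [Set.disjoint_left]; intro v h1 h2
      rw [ConnectedComponent.mem_supp_iff] at h1 h2
      exact hcc (h1.symm.trans h2)
    have h1 := hF₂c ((G.deleteEdges F₂).connectedComponentMk a)
    have h2 := hF₂c ((G.deleteEdges F₂).connectedComponentMk b)
    have h3 := Set.ncard_union_eq hdisj (Set.toFinite _) (Set.toFinite _)
    have h4 : (((G.deleteEdges F₂).connectedComponentMk a).supp ∪
        ((G.deleteEdges F₂).connectedComponentMk b).supp).ncard ≤ (Set.univ : Set V).ncard :=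
      Set.ncard_le_ncard (Set.subset_univ _) (Set.toFinite _)
    omega
  -- Step 1 : G' is connected
  have hG'conn : G'.Connected := by
    by_contra hnc
    have hsome : ∃ c : G'.ConnectedComponent, c.supp.ncard ≤ 2 := by
      by_contra hall; push_neg at hall
      have hcut : IsExtraEdgeCut G 2 F := ⟨hFE, hnc, fun c => hall c⟩
      have : L2 ≤ f := Nat.sInf_le ⟨F, hcut, rfl⟩
      omega
    obtain ⟨c, hc2⟩ := hsome
    have hc1 : 1 ≤ c.supp.ncard := (Set.ncard_pos (Set.toFinite _)).2 (supp_nonempty c)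
    rcases (by omega : c.supp.ncard = 1 ∨ c.supp.ncard = 2) with h1 | h2
    · obtain ⟨v, hv⟩ := Set.ncard_eq_one.1 h1
      have hNv : ∀ w ∈ G.neighborSet v, s(v, w) ∈ F := by
        intro w hw
        have hadj : G.Adj v w := (G.mem_neighborSet _ _).1 hw
        refine crossing_mem_of_comp (c := c) ?_ ?_ hadj
        · rw [hv]; exact rfl
        · rw [hv]; intro hm
          rw [Set.mem_singleton_iff] at hm
          exact hadj.ne hm.symm
      have hcard : degN G v ≤ f :=
        Set.ncard_le_ncard_of_injOn (fun w => s(v, w)) hNv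
          (fun a _ b _ h => Sym2.congr_right.mp h) hFfin
      have := hdeg v; omega
    · obtain ⟨u, v, huv, hsupp⟩ := Set.ncard_eq_two.1 h2
      have hadj' : G'.Adj u v := adj_of_supp_pair hsupp huv
      have hadj : G.Adj u v := hG'le hadj'
      have hbd : bdry G {u, v} ⊆ F := bdry_subset_of_supp_eq hsupp
      have hle : dOut G {u, v} ≤ f := by
        rw [dOut_eq]; exact Set.ncard_le_ncard hbd hFfin
      rw [dOut_pair hadj] at hle
      have := hdeg u; have := hdeg v; omega
  -- surviving minimum-edge-degree edge, and ξ' ≤ ξE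
  set ξ' := xiH G' 1 with hξ'def
  have hsurv : ∃ x y : V, G'.Adj x y ∧ degN G x + degN G y - 2 = ξE := by
    have hetaset : ¬({e ∈ G.edgeSet | ∃ x y, e = s(x, y) ∧ degN G x + degN G y - 2 = xiEdge G} ⊆ F) := by
      intro hsub
      have h1 : eta G ≤ f := Set.ncard_le_ncard hsub hFfin
      omega
    obtain ⟨e, he, heF⟩ := Set.not_subset.1 hetaset
    obtain ⟨heE, x, y, rfl, hxy⟩ := he
    exact ⟨x, y, deleteEdges_adj.2 ⟨(G.mem_edgeSet).1 heE, heF⟩, hxy⟩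
  obtain ⟨x₀, y₀, hx₀adj, hx₀ξ⟩ := hsurv
  have hX2 : ξ' ≤ ξE := by
    have h1 : dOut G' {x₀, y₀} ≤ dOut G {x₀, y₀} := dOut_delete_le G F _
    rw [dOut_pair (hG'le hx₀adj), hx₀ξ] at h1
    refine le_trans (Nat.sInf_le ?_) h1
    exact ⟨{x₀, y₀}, Set.ncard_pair hx₀adj.ne, induce_pair_connected_of_adj hx₀adj, rfl⟩
  -- K1
  have hK1 : ∀ F'' : Set (Sym2 V), IsExtraEdgeCut G' 1 F'' → F''.ncard ≤ ξE →
      ∃ c : (G'.deleteEdges F'').ConnectedComponent, c.supp.ncard = 2 := by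
    intro F'' hcut hle
    obtain ⟨hF''E, hF''nc, hF''c⟩ := hcut
    by_contra hnone; push_neg at hnone
    have hKE : F ∪ F'' ⊆ G.edgeSet := by
      intro e he; rcases he with he | he
      · exact hFE he
      · have h := hF''E he; rw [hG'def, edgeSet_deleteEdges] at h; exact h.1
    have hEq : G.deleteEdges (F ∪ F'') = G'.deleteEdges F'' := (deleteEdges_deleteEdges F F'').symm
    have hcut2 : IsExtraEdgeCut G 2 (F ∪ F'') := by
      refine ⟨hKE, ?_, ?_⟩
      · rw [hEq]; exact hF''nc
      · rw [hEq]
        intro c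
        have h1 := hF''c c
        have h2 := hnone c
        omega
    have h5 : L2 ≤ (F ∪ F'').ncard := Nat.sInf_le ⟨_, hcut2, rfl⟩
    have h6 := Set.ncard_union_le F F''
    omega
  -- K3
  have hK3 : ∀ F'' : Set (Sym2 V), IsExtraEdgeCut G' 1 F'' → ξ' ≤ F''.ncard := by
    intro F'' hcut
    by_cases hle : F''.ncard ≤ ξE
    · obtain ⟨c, hc⟩ := hK1 F'' hcut hle
      obtain ⟨u, v, huv, hsupp⟩ := Set.ncard_eq_two.1 hc
      have hadj'' : (G'.deleteEdges F'').Adj u v := adj_of_supp_pair hsupp huv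
      have hadj' : G'.Adj u v := (deleteEdges_adj.1 hadj'').1
      have hbd : bdry G' {u, v} ⊆ F'' := bdry_subset_of_supp_eq hsupp
      have h1 : dOut G' {u, v} ≤ F''.ncard := by
        rw [dOut_eq]; exact Set.ncard_le_ncard hbd (Set.toFinite _)
      have h2 : ξ' ≤ dOut G' {u, v} :=
        Nat.sInf_le ⟨{u, v}, Set.ncard_pair huv, induce_pair_connected_of_adj hadj', rfl⟩
      omega
    · omega
  -- every edge of F contains any vertex of G'-degree one (used for the star case)
  have hFp : ∀ p : V, degN G' p = 1 → ∀ e ∈ F, p ∈ e := by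
    intro p hdp e heF
    have hsubN : G'.neighborSet p ⊆ G.neighborSet p := by
      intro w hw; exact (G.mem_neighborSet _ _).2 (hG'le ((G'.mem_neighborSet _ _).1 hw))
    have hIsub : (fun w : V => s(p, w)) '' (G.neighborSet p \ G'.neighborSet p) ⊆ F := by
      rintro e' ⟨w, ⟨hw1, hw2⟩, rfl⟩
      by_contra hnF
      exact hw2 ((G'.mem_neighborSet _ _).2
        (deleteEdges_adj.2 ⟨(G.mem_neighborSet _ _).1 hw1, hnF⟩))
    have hIcard : ((fun w : V => s(p, w)) '' (G.neighborSet p \ G'.neighborSet p)).ncard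
        = degN G p - degN G' p := by
      rw [Set.ncard_image_of_injective _ (sym2_inj p), Set.ncard_diff hsubN (Set.toFinite _)]
      rfl
    have hd1 := hdeg p
    have hd2 := hdeg'f p
    have hle' : degN G p - degN G' p ≤ f := by
      rw [← hIcard]; exact Set.ncard_le_ncard hIsub hFfin
    have hEqF : (fun w : V => s(p, w)) '' (G.neighborSet p \ G'.neighborSet p) = F :=
      Set.eq_of_subset_of_ncard_le hIsub (by rw [hIcard]; omega) hFfin
    rw [← hEqF] at heF
    obtain ⟨w, -, rfl⟩ := heF
    exact Sym2.mem_mk_left p w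
  have hpigeon : ∀ p₁ p₂ p₃ : V, p₁ ≠ p₂ → p₁ ≠ p₃ → p₂ ≠ p₃ →
      degN G' p₁ = 1 → degN G' p₂ = 1 → degN G' p₃ = 1 → False := by
    intro p₁ p₂ p₃ h12 h13 h23 hq1 hq2 hq3
    obtain ⟨e₀, he₀⟩ : F.Nonempty := Set.nonempty_of_ncard_ne_zero (by omega)
    obtain ⟨u, v, rfl⟩ := sym2_exists_rep e₀
    have m1 := hFp p₁ hq1 _ he₀
    have m2 := hFp p₂ hq2 _ he₀
    have m3 := hFp p₃ hq3 _ he₀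
    rw [Sym2.mem_iff] at m1 m2 m3
    rcases m1 with rfl | rfl <;> rcases m2 with rfl | rfl <;> rcases m3 with rfl | rfl <;> simp_all
  -- generic component-size lemma for boundary cuts
  have hcomp_ge : ∀ (Y : Set V), (G'.induce Y).Connected → 1 < Y.ncard →
      (∀ z, z ∉ Y → ¬(G'.neighborSet z ⊆ Y)) →
      ∀ c : (G'.deleteEdges (bdry G' Y)).ConnectedComponent, 1 < c.supp.ncard := by
    intro Y hYconn hY2 hnopend c
    obtain ⟨v₀, hv₀⟩ := supp_nonempty c
    by_cases hv₀Y : v₀ ∈ Y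
    · have hsupp : c.supp = Y := by
        have h := supp_eq_of_induce_connected hYconn hv₀Y
        rw [ConnectedComponent.mem_supp_iff] at hv₀
        rw [← hv₀]; exact h
      rw [hsupp]; exact hY2
    · by_contra hle; push_neg at hle
      have h1 : c.supp.ncard = 1 := by
        have := (Set.ncard_pos (Set.toFinite _)).2 ⟨v₀, hv₀⟩; omega
      obtain ⟨z, hz⟩ := Set.ncard_eq_one.1 h1
      have hzv : v₀ = z := by rw [hz] at hv₀; exact hv₀
      subst hzv
      refine hnopend v₀ hv₀Y ?_
      intro w hw
      by_contra hwY
      have hadj : (G'.deleteEdges (bdry G' Y)).Adj v₀ w :=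
        deleteEdges_adj.2 ⟨(G'.mem_neighborSet _ _).1 hw, not_mem_bdry_neither hv₀Y hwY⟩
      have hwsupp : w ∈ c.supp := by
        rw [ConnectedComponent.mem_supp_iff] at hv₀ ⊢
        rw [← hv₀]
        exact ConnectedComponent.eq.2 hadj.symm.reachable
      rw [hz] at hwsupp
      rw [Set.mem_singleton_iff] at hwsupp
      exact ((G'.mem_neighborSet _ _).1 hw).ne hwsupp.symm
  have hmk_cut : ∀ (Y : Set V) (x₁ : V), x₁ ∈ Y → Yᶜ.Nonempty → (G'.induce Y).Connected →
      1 < Y.ncard → (∀ z, z ∉ Y → ¬(G'.neighborSet z ⊆ Y)) →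
      IsExtraEdgeCut G' 1 (bdry G' Y) := by
    rintro Y x₁ hx₁ ⟨w₀, hw₀⟩ hconn hY2 hnp
    exact ⟨bdry_subset G' Y, not_connected_delete_bdry hx₁ hw₀, hcomp_ge Y hconn hY2 hnp⟩
  have hcompl : ∀ (Y : Set V), Y.ncard ≤ 3 → Yᶜ.Nonempty := by
    intro Y hY
    rcases Set.eq_empty_or_nonempty Yᶜ with h | h
    · exfalso
      have hU : Y = Set.univ := Set.compl_empty_iff.1 h
      rw [hU] at hY; omega
    · exact h

  -- ξ' is attained
  have hattain : ∃ X : Set V, X.ncard = 1 + 1 ∧ (G'.induce X).Connected ∧ dOut G' X = xiH G' 1 :=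
    Nat.sInf_mem (⟨dOut G' {x₀, y₀}, {x₀, y₀}, Set.ncard_pair hx₀adj.ne,
      induce_pair_connected_of_adj hx₀adj, rfl⟩ :
        {k | ∃ X : Set V, X.ncard = 1 + 1 ∧ (G'.induce X).Connected ∧ dOut G' X = k}.Nonempty)
  -- pendant case of the Esfahanian–Hakimi argument
  have pendant : ∀ a b z : V, G'.Adj a b → dOut G' {a, b} = ξ' → z ∉ ({a, b} : Set V) →
      G'.neighborSet z = {a} → False := by
    intro a b z hab hdab hz hNz
    have hza : G'.Adj z a := (G'.mem_neighborSet z a).1 (by rw [hNz]; exact rfl)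
    have hdz : degN G' z = 1 := by rw [degN, hNz, Set.ncard_singleton]
    have hzb : z ≠ b := fun h => hz (by rw [h]; exact Or.inr rfl)
    have h1 : ξ' ≤ degN G' z + degN G' a - 2 := by
      rw [← dOut_pair hza]
      exact Nat.sInf_le ⟨{z, a}, Set.ncard_pair hza.ne, induce_pair_connected_of_adj hza, rfl⟩
    rw [dOut_pair hab] at hdab
    have hda1 := hd'pos a
    have hdb1' := hd'pos b
    have hdb1 : degN G' b = 1 := by omega
    have hda2 : 2 ≤ degN G' a := by
      have hsub : ({z, b} : Set V) ⊆ G'.neighborSet a := by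
        rintro t (rfl | ht)
        · exact (G'.mem_neighborSet _ _).2 hza.symm
        · rw [Set.mem_singleton_iff] at ht; subst ht
          exact (G'.mem_neighborSet _ _).2 hab
      calc 2 = ({z, b} : Set V).ncard := (Set.ncard_pair hzb).symm
        _ ≤ _ := Set.ncard_le_ncard hsub (Set.toFinite _)
    have hNb : G'.neighborSet b = {a} := by
      refine (Set.eq_of_subset_of_ncard_le ?_ ?_ (Set.toFinite _)).symm
      · intro t ht; rw [Set.mem_singleton_iff] at ht; subst ht
        exact (G'.mem_neighborSet _ _).2 hab.symm
      · rw [Set.ncard_singleton]; exact le_of_eq hdb1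
    set P := {p : V | p ∈ G'.neighborSet a ∧ G'.neighborSet p ⊆ {a}} with hPdef
    have hzP : z ∈ P := ⟨(G'.mem_neighborSet _ _).2 hza.symm, by rw [hNz]⟩
    have hbP : b ∈ P := ⟨(G'.mem_neighborSet _ _).2 hab, by rw [hNb]⟩
    have haP : a ∉ P := fun h => ((G'.mem_neighborSet _ _).1 h.1).ne rfl
    have hsubzb : ({z, b} : Set V) ⊆ P := by
      rintro t (rfl | ht)
      · exact hzP
      · rw [Set.mem_singleton_iff] at ht; subst ht; exact hbP
    have hP2 : 2 ≤ P.ncard := by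
      calc 2 = ({z, b} : Set V).ncard := (Set.ncard_pair hzb).symm
        _ ≤ _ := Set.ncard_le_ncard hsubzb (Set.toFinite _)
    have hPN : P ⊆ G'.neighborSet a := fun p hp => hp.1
    have hNP1 : ∀ p ∈ P, G'.neighborSet p = {a} := by
      intro p hp
      refine (Set.eq_of_subset_of_ncard_le ?_ ?_ (Set.toFinite _)).symm
      · intro t ht; rw [Set.mem_singleton_iff] at ht; subst ht
        exact (G'.mem_neighborSet _ _).2 ((G'.mem_neighborSet _ _).1 hp.1).symm
      · rw [Set.ncard_singleton]
        have h9 := Set.ncard_le_ncard hp.2 (Set.toFinite _)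
        rw [Set.ncard_singleton] at h9
        exact h9
    have hdP1 : ∀ p ∈ P, degN G' p = 1 := fun p hp => by
      rw [degN, hNP1 p hp, Set.ncard_singleton]
    by_cases hAc : (insert a P)ᶜ = (∅ : Set V)
    · -- star case : impossible by counting edges of F at pendant vertices
      have hU : insert a P = Set.univ := Set.compl_empty_iff.1 hAc
      have h5 : 5 ≤ P.ncard := by
        have h6 := Set.ncard_insert_le a P
        rw [hU] at h6; omega
      have hdiffP : 1 ≤ (P \ {z, b}).ncard := by
        rw [Set.ncard_diff hsubzb (Set.toFinite _), Set.ncard_pair hzb]; omega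
      obtain ⟨p₃, hp₃⟩ := Set.nonempty_of_ncard_ne_zero
        (by omega : (P \ {z, b}).ncard ≠ 0)
      have hp₃z : z ≠ p₃ := fun h => hp₃.2 (by rw [← h]; exact Or.inl rfl)
      have hp₃b : b ≠ p₃ := fun h => hp₃.2 (by rw [← h]; exact Or.inr rfl)
      exact hpigeon z b p₃ hzb hp₃z hp₃b hdz hdb1 (hdP1 p₃ hp₃.1)
    · -- non-star case : boundary of insert a P is a 1-extra cut that is too small
      obtain ⟨w₀, hw₀⟩ := Set.nonempty_iff_ne_empty.2 hAc
      have hhub : ∀ p ∈ P, G'.neighborSet p ⊆ insert a P := by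
        intro p hp t ht
        rw [hNP1 p hp, Set.mem_singleton_iff] at ht
        rw [ht]
        exact Set.mem_insert a P
      have hconnA : (G'.induce (insert a P)).Connected := by
        refine induce_connected_hub (Set.mem_insert a P) ?_
        intro t ht
        rcases Set.mem_insert_iff.1 ht with rfl | htP
        · exact Or.inl rfl
        · exact Or.inr ((G'.mem_neighborSet _ _).1 (hPN htP))
      have hnpA : ∀ z', z' ∉ insert a P → ¬(G'.neighborSet z' ⊆ insert a P) := by
        intro z' hz' hsub
        have hsub2 : G'.neighborSet z' ⊆ {a} := by
          intro t ht
          rcases Set.mem_insert_iff.1 (hsub ht) with rfl | htP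
          · exact rfl
          · exfalso
            have hz'N : z' ∈ G'.neighborSet t :=
              (G'.mem_neighborSet _ _).2 ((G'.mem_neighborSet _ _).1 ht).symm
            have h8 := htP.2 hz'N
            rw [Set.mem_singleton_iff] at h8; subst h8
            exact hz' (Set.mem_insert _ _)
        obtain ⟨t, ht⟩ : (G'.neighborSet z').Nonempty :=
          (Set.ncard_pos (Set.toFinite _)).1 (hd'pos z')
        have hta := hsub2 ht
        rw [Set.mem_singleton_iff] at hta
        rw [hta] at ht
        exact hz' (Set.mem_insert_iff.2 (Or.inr
          ⟨(G'.mem_neighborSet _ _).2 ((G'.mem_neighborSet _ _).1 ht).symm, hsub2⟩))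
      have hA2 : 1 < (insert a P).ncard := by
        rw [Set.ncard_insert_of_notMem haP (Set.toFinite _)]; omega
      have hcutA : IsExtraEdgeCut G' 1 (bdry G' (insert a P)) :=
        hmk_cut _ a (Set.mem_insert a P) ⟨w₀, hw₀⟩ hconnA hA2 hnpA
      have hsize : (bdry G' (insert a P)).ncard = degN G' a - P.ncard := by
        rw [← dOut_eq, dOut_hub hhub,
          Set.diff_insert_of_notMem (by simp : a ∉ G'.neighborSet a),
          Set.ncard_diff hPN (Set.toFinite _)]
        rfl
      have hfin := hK3 _ hcutA
      rw [hsize] at hfin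
      omega
  -- the "z adjacent to both" case
  have bothcase : ∀ a b z : V, G'.Adj a b → dOut G' {a, b} = ξ' → z ∉ ({a, b} : Set V) →
      G'.neighborSet z = {a, b} → False := by
    intro a b z hab hdab0 hz hNz
    have hdab := hdab0
    have hza : G'.Adj z a := (G'.mem_neighborSet z a).1 (by rw [hNz]; exact Or.inl rfl)
    have hzb : G'.Adj z b := (G'.mem_neighborSet z b).1 (by rw [hNz]; exact Or.inr rfl)
    have hzna : z ≠ a := hza.ne
    have hznb : z ≠ b := hzb.ne
    have hdz : degN G' z = 2 := by rw [degN, hNz]; exact Set.ncard_pair hab.ne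
    have h1 : ξ' ≤ degN G' z + degN G' a - 2 := by
      rw [← dOut_pair hza]
      exact Nat.sInf_le ⟨{z, a}, Set.ncard_pair hzna, induce_pair_connected_of_adj hza, rfl⟩
    rw [dOut_pair hab] at hdab
    have hdb2 : 2 ≤ degN G' b := by
      have hsub : ({a, z} : Set V) ⊆ G'.neighborSet b := by
        rintro t (rfl | ht)
        · exact (G'.mem_neighborSet _ _).2 hab.symm
        · rw [Set.mem_singleton_iff] at ht; subst ht
          exact (G'.mem_neighborSet _ _).2 hzb.symm
      calc 2 = ({a, z} : Set V).ncard := (Set.ncard_pair (fun h => hzna h.symm)).symm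
        _ ≤ _ := Set.ncard_le_ncard hsub (Set.toFinite _)
    have hda2 : 2 ≤ degN G' a := by
      have hsub : ({b, z} : Set V) ⊆ G'.neighborSet a := by
        rintro t (rfl | ht)
        · exact (G'.mem_neighborSet _ _).2 hab
        · rw [Set.mem_singleton_iff] at ht; subst ht
          exact (G'.mem_neighborSet _ _).2 hza.symm
      calc 2 = ({b, z} : Set V).ncard := (Set.ncard_pair (fun h => hznb h.symm)).symm
        _ ≤ _ := Set.ncard_le_ncard hsub (Set.toFinite _)
    have hdbeq : degN G' b = 2 := by omega
    have hNbeq : G'.neighborSet b = {a, z} := by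
      refine (Set.eq_of_subset_of_ncard_le ?_ ?_ (Set.toFinite _)).symm
      · rintro t (rfl | ht)
        · exact (G'.mem_neighborSet _ _).2 hab.symm
        · rw [Set.mem_singleton_iff] at ht; subst ht
          exact (G'.mem_neighborSet _ _).2 hzb.symm
      · rw [Set.ncard_pair (fun h => hzna h.symm)]
        exact le_of_eq hdbeq
    have hbz2 : ({b, z} : Set V).ncard = 2 := Set.ncard_pair (fun h => hznb h.symm)
    have haX3 : a ∉ ({b, z} : Set V) := by
      rintro (rfl | h)
      · exact hab.ne rfl
      · rw [Set.mem_singleton_iff] at h; exact hzna h.symm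
    have hsubba : ({b, z} : Set V) ⊆ G'.neighborSet a := by
      rintro t (rfl | ht)
      · exact (G'.mem_neighborSet _ _).2 hab
      · rw [Set.mem_singleton_iff] at ht; subst ht
        exact (G'.mem_neighborSet _ _).2 hza.symm
    have hhub : ∀ p ∈ ({b, z} : Set V), G'.neighborSet p ⊆ insert a {b, z} := by
      rintro p (rfl | hp) t ht
      · rw [hNbeq] at ht
        rcases ht with rfl | ht2
        · exact Set.mem_insert _ _
        · rw [Set.mem_singleton_iff] at ht2; subst ht2
          exact Or.inr (Or.inr rfl)
      · rw [Set.mem_singleton_iff] at hp; subst hp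
        rw [hNz] at ht
        rcases ht with rfl | ht2
        · exact Set.mem_insert _ _
        · rw [Set.mem_singleton_iff] at ht2; subst ht2
          exact Or.inr (Or.inl rfl)
    have hcard3 : (insert a ({b, z} : Set V)).ncard = 3 := by
      rw [Set.ncard_insert_of_notMem haX3 (Set.toFinite _), hbz2]
    have hconn3 : (G'.induce (insert a {b, z})).Connected := by
      refine induce_connected_hub (Set.mem_insert _ _) ?_
      intro t ht
      rcases Set.mem_insert_iff.1 ht with rfl | ht2
      · exact Or.inl rfl
      · rcases ht2 with rfl | ht3
        · exact Or.inr hab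
        · rw [Set.mem_singleton_iff] at ht3; subst ht3; exact Or.inr hza.symm
    have hnp3 : ∀ z', z' ∉ insert a ({b, z} : Set V) →
        ¬(G'.neighborSet z' ⊆ insert a {b, z}) := by
      intro z' hz' hsub
      have hsub1 : G'.neighborSet z' ⊆ {a} := by
        intro t ht
        rcases Set.mem_insert_iff.1 (hsub ht) with rfl | ht2
        · exact rfl
        · exfalso
          have hz'N : z' ∈ G'.neighborSet t :=
            (G'.mem_neighborSet _ _).2 ((G'.mem_neighborSet _ _).1 ht).symm
          rcases ht2 with rfl | ht3
          · rw [hNbeq] at hz'N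
            rcases hz'N with rfl | h4
            · exact hz' (Set.mem_insert _ _)
            · rw [Set.mem_singleton_iff] at h4; subst h4
              exact hz' (Or.inr (Or.inr rfl))
          · rw [Set.mem_singleton_iff] at ht3; subst ht3
            rw [hNz] at hz'N
            rcases hz'N with rfl | h4
            · exact hz' (Set.mem_insert _ _)
            · rw [Set.mem_singleton_iff] at h4; subst h4
              exact hz' (Or.inr (Or.inl rfl))
      obtain ⟨t, ht⟩ : (G'.neighborSet z').Nonempty :=
        (Set.ncard_pos (Set.toFinite _)).1 (hd'pos z')
      have hta := hsub1 ht
      rw [Set.mem_singleton_iff] at hta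
      rw [hta] at ht
      have hNz' : G'.neighborSet z' = {a} :=
        Set.Subset.antisymm hsub1 (Set.singleton_subset_iff.2 ht)
      have hz'ab : z' ∉ ({a, b} : Set V) := by
        rintro (rfl | h)
        · exact hz' (Set.mem_insert _ _)
        · rw [Set.mem_singleton_iff] at h
          rw [h] at hz'
          exact hz' (Or.inr (Or.inl rfl))
      exact pendant a b z' hab hdab0 hz'ab hNz'
    obtain ⟨w₀, hw₀⟩ := hcompl (insert a {b, z}) (le_of_eq hcard3)
    have hcut3 := hmk_cut _ a (Set.mem_insert _ _) ⟨w₀, hw₀⟩ hconn3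
      (by rw [hcard3]; omega) hnp3
    have hsize3 : (bdry G' (insert a {b, z})).ncard = degN G' a - 2 := by
      rw [← dOut_eq, dOut_hub hhub,
        Set.diff_insert_of_notMem (by simp : a ∉ G'.neighborSet a),
        Set.ncard_diff hsubba (Set.toFinite _), hbz2]
      rfl
    have hfin := hK3 _ hcut3
    rw [hsize3] at hfin
    omega
  -- the minimum-pair boundary is a 1-extra cut of size ξ'
  have hEH : ∃ Fc : Set (Sym2 V), IsExtraEdgeCut G' 1 Fc ∧ Fc.ncard = ξ' := by
    obtain ⟨X0, hX0card, hX0conn, hX0d⟩ := hattain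
    obtain ⟨x, y, hxy, rfl⟩ := Set.ncard_eq_two.1 (by omega : X0.ncard = 2)
    have hadjxy : G'.Adj x y := adj_of_induce_pair_connected hxy hX0conn
    have hnp : ∀ z, z ∉ ({x, y} : Set V) → ¬(G'.neighborSet z ⊆ {x, y}) := by
      intro z hz hsub
      have hnon : (G'.neighborSet z).Nonempty := (Set.ncard_pos (Set.toFinite _)).1 (hd'pos z)
      by_cases hx1 : x ∈ G'.neighborSet z <;> by_cases hy1 : y ∈ G'.neighborSet z
      · have hNz : G'.neighborSet z = {x, y} := Set.Subset.antisymm hsub (by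
          rintro t (rfl | ht)
          · exact hx1
          · rw [Set.mem_singleton_iff] at ht; subst ht; exact hy1)
        exact bothcase x y z hadjxy hX0d hz hNz
      · have hNz : G'.neighborSet z = {x} := by
          refine Set.Subset.antisymm ?_ (Set.singleton_subset_iff.2 hx1)
          intro t ht
          rcases hsub ht with rfl | ht2
          · exact rfl
          · rw [Set.mem_singleton_iff] at ht2; subst ht2; exact absurd ht hy1
        exact pendant x y z hadjxy hX0d hz hNz
      · have hNz : G'.neighborSet z = {y} := by
          refine Set.Subset.antisymm ?_ (Set.singleton_subset_iff.2 hy1)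
          intro t ht
          rcases hsub ht with rfl | ht2
          · exact absurd ht hx1
          · exact ht2
        have hswap : dOut G' {y, x} = ξ' := by rw [Set.pair_comm y x]; exact hX0d
        have hz2 : z ∉ ({y, x} : Set V) := by rw [Set.pair_comm y x]; exact hz
        exact pendant y x z hadjxy.symm hswap hz2 hNz
      · obtain ⟨t, ht⟩ := hnon
        rcases hsub ht with rfl | ht2
        · exact hx1 ht
        · rw [Set.mem_singleton_iff] at ht2; subst ht2; exact hy1 ht
    obtain ⟨w₀, hw₀⟩ := hcompl {x, y} (by rw [Set.ncard_pair hxy]; omega)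
    have hcut := hmk_cut {x, y} x (Or.inl rfl) ⟨w₀, hw₀⟩ hX0conn
      (by rw [Set.ncard_pair hxy]; omega) hnp
    exact ⟨bdry G' {x, y}, hcut, by rw [← dOut_eq]; exact hX0d⟩
  -- assemble SuperLambda
  obtain ⟨Fc, hFc, hFcn⟩ := hEH
  have hlam_le : lambdaH G' 1 ≤ ξ' := Nat.sInf_le ⟨Fc, hFc, hFcn⟩
  have hlam_ge : ξ' ≤ lambdaH G' 1 := by
    have hne2 : {k | ∃ F'' : Set (Sym2 V), IsExtraEdgeCut G' 1 F'' ∧ F''.ncard = k}.Nonempty :=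
      ⟨ξ', Fc, hFc, hFcn⟩
    obtain ⟨F'', hF'', hF''n⟩ :
        ∃ F'' : Set (Sym2 V), IsExtraEdgeCut G' 1 F'' ∧ F''.ncard = lambdaH G' 1 :=
      Nat.sInf_mem hne2
    rw [← hF''n]
    exact hK3 F'' hF''
  refine ⟨hG'conn, ⟨Fc, hFc⟩, le_antisymm hlam_le hlam_ge, ?_⟩
  intro F'' hcut hmin
  have hminle : F''.ncard ≤ ξE := by
    rw [hmin]
    exact le_trans hlam_le hX2
  obtain ⟨c, hc⟩ := hK1 F'' hcut hminle
  exact ⟨c, by omega⟩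

end Stmt5

/-- If `G` is `λ''`-connected, super-`λ'`, and `η(G) ≥ δ(G)`, then
`ρ'(G) ≥ min {λ''(G) - ξ(G) - 1, δ(G) - 1}`. -/
theorem stmt5 {V : Type*} [Fintype V] (G : SimpleGraph V)
    (hl2 : LambdaConn G 2) (hs : SuperLambda G 1) (heta : minDeg G ≤ eta G) :
    min (lambdaH G 2 - xiEdge G - 1) (minDeg G - 1) ≤ rhoH G 1 := by
  classical
  have hup : ∀ m ∈ {m : ℕ | ∀ F : Set (Sym2 V), F ⊆ G.edgeSet → F.ncard ≤ m →
      SuperLambda (G.deleteEdges F) 1}, m ≤ G.edgeSet.ncard := by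
    intro m hm
    by_contra hgt; push_neg at hgt
    obtain ⟨hc, -, -, -⟩ := hm G.edgeSet (subset_refl _) (le_of_lt hgt)
    obtain ⟨a, b, hab⟩ : ∃ a b : V, a ≠ b := by
      by_contra hsub; push_neg at hsub
      obtain ⟨F₂, -, hnc, -⟩ := hl2
      haveI : Nonempty V := hs.1.nonempty
      exact hnc ⟨fun a b => (hsub a b) ▸ Reachable.refl a⟩
    obtain ⟨w⟩ := hc.preconnected a b
    cases w with
    | nil => exact hab rfl
    | cons h' p =>
      exact (deleteEdges_adj.1 h').2 ((G.mem_edgeSet).2 (deleteEdges_adj.1 h').1)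
  refine le_csSup ⟨G.edgeSet.ncard, fun m hm => hup m hm⟩ ?_
  intro F hFE hFle
  exact Stmt5.main G hl2 hs heta F hFE (le_trans hFle (min_le_left _ _))
    (le_trans hFle (min_le_right _ _))
end
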